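/- arXiv:2203.04196 — 6 statements merged into one kernel-verified Lean document; each statement's English description precedes it below -/
import Mathlib

section
/- For every integer m ≥ 1 and every n ≥ 1, the rising factorial (Pochhammer) moments of the number of nonzero steps satisfy E[Σ_n·(Σ_n+1)···(Σ_n+m-1)] = m!·Γ(n + m·b) / (Γ(n)·Γ(1 + m·b)). -/
open MeasureTheory Filter Real Topology

noncomputable section

/-- The elephant random walk with stops (ERWS): a sequence of steps `X n` (for `n ≥ 1`),
adapted to a filtration `F`, with values in `{-1, 0, 1}`, prescribed first-step law and
prescribed conditional first and second moments of the steps. -/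
structure ERWS {Ω : Type*} [m0 : MeasurableSpace Ω] (μ : Measure Ω) (p q s : ℝ) where
  X : ℕ → Ω → ℝ
  F : MeasureTheory.Filtration ℕ m0
  adapted : ∀ n, 1 ≤ n → StronglyMeasurable[F n] (X n)
  val_mem : ∀ n, 1 ≤ n → ∀ ω, X n ω = -1 ∨ X n ω = 0 ∨ X n ω = 1
  init_one : μ {ω | X 1 ω = 1} = ENNReal.ofReal s
  init_neg : μ {ω | X 1 ω = -1} = ENNReal.ofReal (1 - s)
  cond_one : ∀ n, 1 ≤ n →
    μ[X (n + 1)|F n] =ᵐ[μ] fun ω => (p - q) * (∑ k ∈ Finset.Icc 1 n, X k ω) / n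
  cond_two : ∀ n, 1 ≤ n →
    μ[fun ω => (X (n + 1) ω) ^ 2|F n] =ᵐ[μ]
      fun ω => (p + q) * (∑ k ∈ Finset.Icc 1 n, (X k ω) ^ 2) / n

namespace ERWS

variable {Ω : Type*} [m0 : MeasurableSpace Ω] {μ : Measure Ω} {p q s : ℝ}

/-- The position `S n = X 1 + ⋯ + X n` of the ERWS. -/
def S (e : ERWS μ p q s) (n : ℕ) (ω : Ω) : ℝ := ∑ k ∈ Finset.Icc 1 n, e.X k ω

/-- The number of nonzero steps `Σ n = X 1 ² + ⋯ + X n ²` of the ERWS. -/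
def Sig (e : ERWS μ p q s) (n : ℕ) (ω : Ω) : ℝ := ∑ k ∈ Finset.Icc 1 n, (e.X k ω) ^ 2

end ERWS

section Helpers

lemma poch_shift' (a : ℝ) (k : ℕ) :
    ∏ j ∈ Finset.range (k+1), (a + j) = a * ∏ j ∈ Finset.range k, (a + 1 + j) := by
  rw [Finset.prod_range_succ']
  push_cast
  rw [show (a + 0 : ℝ) = a by ring, mul_comm]
  congr 1
  exact Finset.prod_congr rfl fun j _ => by ring

lemma poch_step' (a y : ℝ) (hy : y = 0 ∨ y = 1) (k : ℕ) :
    ∏ j ∈ Finset.range (k+1), (a + y + j)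
      = ∏ j ∈ Finset.range (k+1), (a + j)
        + ((k:ℝ)+1) * (y * ∏ j ∈ Finset.range k, (a + 1 + j)) := by
  rcases hy with h | h
  · simp [h]
  · subst h
    rw [poch_shift' a k, Finset.prod_range_succ]
    ring

lemma abs_prod_le' {ι : Type*} (s : Finset ι) (f : ι → ℝ) (C : ℝ)
    (h : ∀ i ∈ s, |f i| ≤ C) : |∏ i ∈ s, f i| ≤ C ^ s.card := by
  rw [Finset.abs_prod]
  calc ∏ i ∈ s, |f i| ≤ ∏ _i ∈ s, C := Finset.prod_le_prod (fun i _ => abs_nonneg _) h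
    _ = C ^ s.card := Finset.prod_const C

lemma fact_prod' (m : ℕ) : ∏ j ∈ Finset.range m, ((1:ℝ) + j) = m.factorial := by
  have h : ∀ j ∈ Finset.range m, (1:ℝ) + j = ((j+1 : ℕ) : ℝ) := fun j _ => by push_cast; ring
  rw [Finset.prod_congr rfl h, ← Nat.cast_prod, Finset.prod_range_add_one_eq_factorial]

end Helpers

namespace ERWSProof

variable {Ω : Type*} [m0 : MeasurableSpace Ω] {μ : Measure Ω} [IsProbabilityMeasure μ]
  {p q s : ℝ}

/-- boundedness of steps -/
lemma X_abs_le (e : ERWS μ p q s) (k : ℕ) (hk : 1 ≤ k) (ω : Ω) : |e.X k ω| ≤ 1 := by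
  rcases e.val_mem k hk ω with h | h | h <;> rw [h] <;> norm_num

lemma Xsq_mem (e : ERWS μ p q s) (k : ℕ) (hk : 1 ≤ k) (ω : Ω) :
    (e.X k ω) ^ 2 = 0 ∨ (e.X k ω) ^ 2 = 1 := by
  rcases e.val_mem k hk ω with h | h | h <;> rw [h] <;> norm_num

lemma Sig_sm (e : ERWS μ p q s) (n : ℕ) : StronglyMeasurable[e.F n] (e.Sig n) := by
  apply Finset.stronglyMeasurable_fun_sum
  intro k hk
  simp only [Finset.mem_Icc] at hk
  exact (((e.adapted k hk.1).mono (e.F.mono hk.2)).pow 2)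

lemma Sig_abs_le (e : ERWS μ p q s) (n : ℕ) (ω : Ω) : |e.Sig n ω| ≤ n := by
  unfold ERWS.Sig
  calc |∑ k ∈ Finset.Icc 1 n, (e.X k ω) ^ 2| ≤ ∑ k ∈ Finset.Icc 1 n, |(e.X k ω) ^ 2| :=
        Finset.abs_sum_le_sum_abs _ _
    _ ≤ ∑ _k ∈ Finset.Icc 1 n, 1 := by
        refine Finset.sum_le_sum fun k hk => ?_
        simp only [Finset.mem_Icc] at hk
        rcases Xsq_mem e k hk.1 ω with h | h <;> rw [h] <;> norm_num
    _ = n := by simp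

/-- the first step is a.s. nonzero -/
lemma X1_sq_ae_one (e : ERWS μ p q s) (hs0 : 0 ≤ s) (hs1 : s ≤ 1) :
    ∀ᵐ ω ∂μ, (e.X 1 ω) ^ 2 = 1 := by
  have hX1 : Measurable (e.X 1) := ((e.adapted 1 le_rfl).mono (e.F.le 1)).measurable
  have hA : MeasurableSet {ω | e.X 1 ω = 1} := hX1 (measurableSet_singleton 1)
  have hB : MeasurableSet {ω | e.X 1 ω = -1} := hX1 (measurableSet_singleton (-1))
  have hC : MeasurableSet {ω | e.X 1 ω = 0} := hX1 (measurableSet_singleton 0)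
  have hdisj1 : Disjoint {ω | e.X 1 ω = 1} {ω | e.X 1 ω = -1} := by
    rw [Set.disjoint_left]; intro ω h1 h2; simp only [Set.mem_setOf_eq] at h1 h2
    rw [h1] at h2; norm_num at h2
  have hdisj2 : Disjoint ({ω | e.X 1 ω = 1} ∪ {ω | e.X 1 ω = -1}) {ω | e.X 1 ω = 0} := by
    rw [Set.disjoint_left]; rintro ω (h1 | h1) h2 <;> simp only [Set.mem_setOf_eq] at h1 h2 <;>
      rw [h1] at h2 <;> norm_num at h2
  have huniv : ({ω | e.X 1 ω = 1} ∪ {ω | e.X 1 ω = -1}) ∪ {ω | e.X 1 ω = 0} = Set.univ := by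
    ext ω; simp only [Set.mem_union, Set.mem_setOf_eq, Set.mem_univ, iff_true]
    rcases e.val_mem 1 le_rfl ω with h | h | h
    · exact Or.inl (Or.inr h)
    · exact Or.inr h
    · exact Or.inl (Or.inl h)
  have hsum : (1 : ENNReal) = ENNReal.ofReal s + ENNReal.ofReal (1 - s) + μ {ω | e.X 1 ω = 0} := by
    have := measure_union (μ := μ) hdisj2 hC
    rw [huniv, measure_univ] at this
    rw [this, measure_union hdisj1 hB, e.init_one, e.init_neg]
  have hone : ENNReal.ofReal s + ENNReal.ofReal (1 - s) = 1 := by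
    rw [← ENNReal.ofReal_add hs0 (by linarith)]
    norm_num
  rw [hone] at hsum
  have hz : μ {ω | e.X 1 ω = 0} = 0 := by
    by_contra h
    have : (1 : ENNReal) < 1 + μ {ω | e.X 1 ω = 0} :=
      ENNReal.lt_add_right ENNReal.one_ne_top h
    rw [← hsum] at this
    exact lt_irrefl _ this
  rw [ae_iff]
  have hsub : {ω | ¬ (e.X 1 ω) ^ 2 = 1} ⊆ {ω | e.X 1 ω = 0} := by
    intro ω h
    simp only [Set.mem_setOf_eq] at h ⊢
    rcases e.val_mem 1 le_rfl ω with h1 | h1 | h1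
    · exfalso; apply h; rw [h1]; norm_num
    · exact h1
    · exfalso; apply h; rw [h1]; norm_num
  exact measure_mono_null hsub hz

end ERWSProof

/-- the rising factorial (Pochhammer) moments of the number of nonzero steps
satisfy `E[Σ_n (Σ_n + 1) ⋯ (Σ_n + m - 1)] = m! Γ(n + m b)/(Γ(n) Γ(1 + m b))`, `b = p + q`. -/
theorem erws_Sig_pochhammer_moments
    {Ω : Type*} [m0 : MeasurableSpace Ω] {μ : Measure Ω} [IsProbabilityMeasure μ]
    {p q r s : ℝ} (hp : 0 ≤ p) (hq : 0 ≤ q) (hr0 : 0 < r) (hr1 : r < 1)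
    (hpqr : p + q + r = 1) (hs0 : 0 ≤ s) (hs1 : s ≤ 1)
    (e : ERWS μ p q s) :
    ∀ m n : ℕ, 1 ≤ m → 1 ≤ n →
      ∫ ω, (∏ j ∈ Finset.range m, (e.Sig n ω + j)) ∂μ
        = (m.factorial : ℝ) * Real.Gamma (n + m * (p + q))
            / (Real.Gamma n * Real.Gamma (1 + m * (p + q))) := by
  intro m n hm hn
  obtain ⟨k, rfl⟩ : ∃ k, m = k + 1 := ⟨m - 1, (Nat.succ_pred_eq_of_pos hm).symm⟩
  set b : ℝ := p + q with hb
  have hb0 : 0 ≤ b := by positivity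
  set c : ℝ := ((k:ℝ) + 1) * b with hc
  have hc0 : 0 ≤ c := by positivity
  -- integrability helper
  have integ : ∀ (f : Ω → ℝ) (C : ℝ), StronglyMeasurable f → (∀ ω, |f ω| ≤ C) →
      Integrable f μ := fun f C hf h =>
    ⟨hf.aestronglyMeasurable, HasFiniteIntegral.of_bounded (C := C)
      (ae_of_all _ fun ω => by simpa [Real.norm_eq_abs] using h ω)⟩
  -- measurability and bounds for the main integrand
  have hPsm : ∀ N : ℕ, StronglyMeasurable
      (fun ω => ∏ j ∈ Finset.range (k+1), (e.Sig N ω + j)) := by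
    intro N
    exact Finset.stronglyMeasurable_fun_prod _ fun j _ =>
      ((ERWSProof.Sig_sm e N).mono (e.F.le N)).add_const (j : ℝ)
  have hPbd : ∀ N : ℕ, ∀ ω, |∏ j ∈ Finset.range (k+1), (e.Sig N ω + j)|
      ≤ ((N:ℝ) + k + 1) ^ (k+1) := by
    intro N ω
    have := abs_prod_le' (Finset.range (k+1)) (fun j => e.Sig N ω + j) ((N:ℝ) + k + 1)
      (fun j hj => by
        have hj' : (j:ℝ) ≤ k := by exact_mod_cast Nat.lt_succ_iff.mp (Finset.mem_range.mp hj)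
        have hS := ERWSProof.Sig_abs_le e N ω
        calc |e.Sig N ω + (j:ℝ)| ≤ |e.Sig N ω| + |(j:ℝ)| := abs_add_le _ _
          _ ≤ (N:ℝ) + k + 1 := by
            rw [Nat.abs_cast]; linarith)
    simpa [Finset.card_range] using this
  -- the one-step recurrence
  have step : ∀ N : ℕ, 1 ≤ N →
      ∫ ω, ∏ j ∈ Finset.range (k+1), (e.Sig (N+1) ω + j) ∂μ
        = (1 + c / N) * ∫ ω, ∏ j ∈ Finset.range (k+1), (e.Sig N ω + j) ∂μ := by
    intro N hN
    set Q : Ω → ℝ := fun ω => ∏ j ∈ Finset.range k, (e.Sig N ω + 1 + j) with hQ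
    set Y : Ω → ℝ := fun ω => (e.X (N+1) ω) ^ 2 with hY
    have hQsmF : StronglyMeasurable[e.F N] Q :=
      Finset.stronglyMeasurable_fun_prod _ fun j _ =>
        (((ERWSProof.Sig_sm e N).add_const 1).add_const (j:ℝ))
    have hQsm : StronglyMeasurable Q := hQsmF.mono (e.F.le N)
    have hQbd : ∀ ω, |Q ω| ≤ ((N:ℝ) + k + 1) ^ k := by
      intro ω
      have := abs_prod_le' (Finset.range k) (fun j => e.Sig N ω + 1 + j) ((N:ℝ) + k + 1)
        (fun j hj => by
          have hj' : (j:ℝ) ≤ k := le_of_lt (by exact_mod_cast Finset.mem_range.mp hj)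
          have hS := ERWSProof.Sig_abs_le e N ω
          calc |e.Sig N ω + 1 + (j:ℝ)| ≤ |e.Sig N ω| + |1 + (j:ℝ)| := by
                rw [add_assoc]; exact abs_add_le _ _
            _ ≤ (N:ℝ) + k + 1 := by
                rw [abs_of_nonneg (by positivity : (0:ℝ) ≤ 1 + (j:ℝ))]; linarith)
      simpa [Finset.card_range] using this
    have hYsm : StronglyMeasurable Y :=
      ((e.adapted (N+1) (by omega)).mono (e.F.le (N+1))).pow 2
    have hYbd : ∀ ω, |Y ω| ≤ 1 := by
      intro ω
      rcases ERWSProof.Xsq_mem e (N+1) (by omega) ω with h | h <;> simp [hY, h]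
    have hYint : Integrable Y μ := integ Y 1 hYsm hYbd
    have hQYint : Integrable (Q * Y) μ := by
      refine integ _ (((N:ℝ) + k + 1) ^ k) (hQsm.mul hYsm) fun ω => ?_
      calc |(Q * Y) ω| = |Q ω| * |Y ω| := abs_mul _ _
        _ ≤ ((N:ℝ) + k + 1) ^ k * 1 :=
            mul_le_mul (hQbd ω) (hYbd ω) (abs_nonneg _) ((abs_nonneg _).trans (hQbd ω))
        _ = _ := mul_one _
    have hpull : μ[Q * Y|e.F N] =ᵐ[μ] Q * μ[Y|e.F N] :=
      condExp_mul_of_stronglyMeasurable_left hQsmF hQYint hYint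
    have hcond : μ[Y|e.F N] =ᵐ[μ] fun ω => b * e.Sig N ω / N := e.cond_two N hN
    have hcomb : μ[Q * Y|e.F N] =ᵐ[μ] fun ω => (b / N) * (e.Sig N ω * Q ω) := by
      refine hpull.trans ?_
      filter_upwards [hcond] with ω h
      simp only [Pi.mul_apply, h]
      ring
    have key : ∫ ω, Q ω * Y ω ∂μ
        = (b / N) * ∫ ω, ∏ j ∈ Finset.range (k+1), (e.Sig N ω + j) ∂μ := by
      have h1 : ∫ ω, (Q * Y) ω ∂μ = ∫ ω, (μ[Q * Y|e.F N]) ω ∂μ :=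
        (integral_condExp (e.F.le N)).symm
      rw [show (∫ ω, Q ω * Y ω ∂μ) = ∫ ω, (Q * Y) ω ∂μ from rfl, h1,
        integral_congr_ae hcomb, integral_const_mul _ _]
      congr 1
      exact integral_congr_ae (Eventually.of_forall fun ω => (poch_shift' (e.Sig N ω) k).symm)
    have hpt : ∀ ω, ∏ j ∈ Finset.range (k+1), (e.Sig (N+1) ω + j)
        = ∏ j ∈ Finset.range (k+1), (e.Sig N ω + j) + ((k:ℝ)+1) * (Q ω * Y ω) := by
      intro ω
      have hSig : e.Sig (N+1) ω = e.Sig N ω + Y ω := by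
        unfold ERWS.Sig
        rw [Finset.sum_Icc_succ_top (by omega : 1 ≤ N + 1)]
      rw [hSig, poch_step' (e.Sig N ω) (Y ω) (ERWSProof.Xsq_mem e (N+1) (by omega) ω) k]
      ring
    have hQYint' : Integrable (fun ω => ((k:ℝ)+1) * (Q ω * Y ω)) μ := by
      exact (Integrable.const_mul hQYint _)
    calc ∫ ω, ∏ j ∈ Finset.range (k+1), (e.Sig (N+1) ω + j) ∂μ
        = ∫ ω, (∏ j ∈ Finset.range (k+1), (e.Sig N ω + j)
              + ((k:ℝ)+1) * (Q ω * Y ω)) ∂μ :=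
          integral_congr_ae (Eventually.of_forall hpt)
      _ = (∫ ω, ∏ j ∈ Finset.range (k+1), (e.Sig N ω + j) ∂μ)
            + ((k:ℝ)+1) * ∫ ω, Q ω * Y ω ∂μ := by
          rw [integral_add (integ _ _ (hPsm N) (hPbd N)) hQYint', integral_const_mul _ _]
      _ = (1 + c / N) * ∫ ω, ∏ j ∈ Finset.range (k+1), (e.Sig N ω + j) ∂μ := by
          rw [key, hc]; ring
  -- main induction
  have main : ∀ N : ℕ, 1 ≤ N →
      ∫ ω, ∏ j ∈ Finset.range (k+1), (e.Sig N ω + j) ∂μ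
        = ((k+1).factorial : ℝ) * Real.Gamma (N + c)
            / (Real.Gamma N * Real.Gamma (1 + c)) := by
    have hΓc : Real.Gamma (1 + c) ≠ 0 := (Real.Gamma_pos_of_pos (by linarith)).ne'
    intro N hN
    induction N, hN using Nat.le_induction with
    | base =>
      have h1 : ∀ᵐ ω ∂μ, (∏ j ∈ Finset.range (k+1), (e.Sig 1 ω + j))
          = ((k+1).factorial : ℝ) := by
        filter_upwards [ERWSProof.X1_sq_ae_one e hs0 hs1] with ω hω
        have hSig1 : e.Sig 1 ω = 1 := by
          unfold ERWS.Sig; rw [Finset.Icc_self, Finset.sum_singleton, hω]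
        rw [hSig1, fact_prod']
      rw [integral_congr_ae h1, integral_const, probReal_univ, one_smul,
        Nat.cast_one, Real.Gamma_one]
      field_simp
    | succ N hN ih =>
      rw [step N hN, ih]
      have hN0 : (0:ℝ) < N := by exact_mod_cast hN
      have hΓN : Real.Gamma ((N:ℝ)+1) = N * Real.Gamma N := Real.Gamma_add_one hN0.ne'
      have hΓNc : Real.Gamma ((N:ℝ)+1+c) = ((N:ℝ)+c) * Real.Gamma ((N:ℝ)+c) := by
        rw [show (N:ℝ)+1+c = ((N:ℝ)+c)+1 by ring, Real.Gamma_add_one (by linarith)]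
      push_cast
      rw [hΓNc, hΓN]
      have h1 : Real.Gamma (N:ℝ) ≠ 0 := (Real.Gamma_pos_of_pos hN0).ne'
      field_simp
  have hcast : ((k+1 : ℕ):ℝ) = (k:ℝ)+1 := by push_cast; ring
  rw [hcast, ← hc]
  exact main n hn
end
end

section
/- For every n ≥ 1, the mean position of the ERWS is E[S_n] = (2s - 1)·Γ(n + a) / (Γ(n)·Γ(a + 1)). -/
open MeasureTheory Filter Real Topology

noncomputable section

/-- the mean position of the ERWS is
`E[S_n] = (2s - 1) Γ(n + a)/(Γ(n) Γ(a + 1))` where `a = p - q`. -/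
theorem erws_mean_position
    {Ω : Type*} [m0 : MeasurableSpace Ω] {μ : Measure Ω} [IsProbabilityMeasure μ]
    {p q r s : ℝ} (hp : 0 ≤ p) (hq : 0 ≤ q) (hr0 : 0 < r) (hr1 : r < 1)
    (hpqr : p + q + r = 1) (hs0 : 0 ≤ s) (hs1 : s ≤ 1)
    (e : ERWS μ p q s) :
    ∀ n : ℕ, 1 ≤ n →
      ∫ ω, e.S n ω ∂μ
        = (2 * s - 1) * Real.Gamma (n + (p - q))
            / (Real.Gamma n * Real.Gamma ((p - q) + 1)) := by
  set a : ℝ := p - q with ha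
  have ha1 : -1 < a := by
    have : p + q = 1 - r := by linarith
    simp only [ha]; nlinarith
  have ha2 : a < 1 := by nlinarith
  -- measurability of steps
  have hmeas : ∀ k : ℕ, 1 ≤ k → StronglyMeasurable (e.X k) := fun k hk =>
    (e.adapted k hk).mono (e.F.le k)
  have habs : ∀ k : ℕ, 1 ≤ k → ∀ ω, ‖e.X k ω‖ ≤ 1 := by
    intro k hk ω
    rcases e.val_mem k hk ω with h | h | h <;> rw [h] <;> norm_num
  have hint : ∀ k : ℕ, 1 ≤ k → Integrable (e.X k) μ := by
    intro k hk
    exact (integrable_const (1 : ℝ)).mono' (hmeas k hk).aestronglyMeasurable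
      (Filter.Eventually.of_forall (habs k hk))
  have hSint : ∀ n : ℕ, Integrable (e.S n) μ := by
    intro n
    exact integrable_finset_sum _ fun i hi => hint i (Finset.mem_Icc.mp hi).1
  -- base case: E[S 1] = 2s - 1
  have hbase : ∫ ω, e.S 1 ω ∂μ = 2 * s - 1 := by
    have hS1 : e.S 1 = fun ω => ({ω | e.X 1 ω = 1} : Set Ω).indicator 1 ω
        - ({ω | e.X 1 ω = -1} : Set Ω).indicator 1 ω := by
      funext ω
      simp only [ERWS.S, Finset.Icc_self, Finset.sum_singleton]
      rcases e.val_mem 1 le_rfl ω with h | h | h <;>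
        simp [Set.indicator_apply, Set.mem_setOf_eq, h] <;> norm_num
    have hA : MeasurableSet {ω | e.X 1 ω = 1} :=
      (hmeas 1 le_rfl).measurable (measurableSet_singleton (1 : ℝ))
    have hB : MeasurableSet {ω | e.X 1 ω = -1} :=
      (hmeas 1 le_rfl).measurable (measurableSet_singleton (-1 : ℝ))
    rw [hS1, integral_sub (⟨(stronglyMeasurable_one.indicator hA).aestronglyMeasurable, ?_⟩)
      (⟨(stronglyMeasurable_one.indicator hB).aestronglyMeasurable, ?_⟩),
      integral_indicator_one hA, integral_indicator_one hB, measureReal_def, measureReal_def, e.init_one, e.init_neg,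
      ENNReal.toReal_ofReal hs0, ENNReal.toReal_ofReal (by linarith)]
    · ring
    · exact ((integrable_const (1:ℝ)).indicator hA).hasFiniteIntegral
    · exact ((integrable_const (1:ℝ)).indicator hB).hasFiniteIntegral
  have hGane : Real.Gamma (a + 1) ≠ 0 := ne_of_gt (Real.Gamma_pos_of_pos (by linarith))
  intro n hn
  induction n, hn using Nat.le_induction with
  | base =>
    rw [hbase]
    simp only [Nat.cast_one, Real.Gamma_one, one_mul, add_comm (1:ℝ) a]
    field_simp
  | succ n hn ih =>
    have hn0 : (n : ℝ) ≠ 0 := Nat.cast_ne_zero.mpr (by omega)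
    have hnpos : (0 : ℝ) < n := by positivity
    have hna : (0 : ℝ) < n + a := by
      have : (1 : ℝ) ≤ n := by exact_mod_cast hn
      linarith
    -- E[X (n+1)] = a/n * E[S n]
    have hX : ∫ ω, e.X (n + 1) ω ∂μ = a / n * ∫ ω, e.S n ω ∂μ := by
      rw [← MeasureTheory.integral_condExp (e.F.le n) (f := e.X (n + 1)),
        integral_congr_ae (e.cond_one n hn)]
      have : (fun ω => a * (∑ k ∈ Finset.Icc 1 n, e.X k ω) / n)
          = fun ω => a / n * e.S n ω := by
        funext ω; rw [ERWS.S]; ring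
      rw [this, integral_const_mul]
    have hsplit : ∫ ω, e.S (n + 1) ω ∂μ = ∫ ω, e.S n ω ∂μ + ∫ ω, e.X (n + 1) ω ∂μ := by
      have : e.S (n + 1) = fun ω => e.S n ω + e.X (n + 1) ω := by
        funext ω
        simp only [ERWS.S]
        exact Finset.sum_Icc_succ_top (by omega) _
      rw [this, integral_add (hSint n) (hint (n + 1) (by omega))]
    have hGn : Real.Gamma (↑(n + 1)) = n * Real.Gamma n := by
      push_cast
      exact Real.Gamma_add_one hn0
    have hGna : Real.Gamma (↑(n + 1) + a) = (n + a) * Real.Gamma (n + a) := by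
      have : ((n : ℝ) + 1 + a) = ((n : ℝ) + a) + 1 := by ring
      push_cast
      rw [this, Real.Gamma_add_one (ne_of_gt hna)]
    have hGnne : Real.Gamma n ≠ 0 := ne_of_gt (Real.Gamma_pos_of_pos hnpos)
    rw [hsplit, hX, ih, hGn, hGna]
    field_simp
end
end

section
/- For every n ≥ 1, the mixed moment of the position and the number of nonzero steps of the ERWS is E[S_n·Σ_n] = ((2s-1)/b)·( Γ(n + a + b)/(Γ(n)·Γ(a + b)) − a·Γ(n + a)/(Γ(n)·Γ(a + 1)) ). -/
open MeasureTheory Filter Real Topology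

noncomputable section

section Aux2

variable {Ω : Type*} [m0 : MeasurableSpace Ω] {μ : Measure Ω} {p q s : ℝ}

lemma erws_X_sm (e : ERWS μ p q s) {n : ℕ} (hn : 1 ≤ n) : StronglyMeasurable (e.X n) :=
  (e.adapted n hn).mono (e.F.le n)

lemma erws_X_abs (e : ERWS μ p q s) {n : ℕ} (hn : 1 ≤ n) (ω : Ω) : |e.X n ω| ≤ 1 := by
  rcases e.val_mem n hn ω with h | h | h <;> rw [h] <;> norm_num

lemma erws_S_sm (e : ERWS μ p q s) (n : ℕ) : StronglyMeasurable[e.F n] (e.S n) := by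
  refine Finset.stronglyMeasurable_fun_sum _ fun k hk => ?_
  exact (e.adapted k (Finset.mem_Icc.mp hk).1).mono (e.F.mono (Finset.mem_Icc.mp hk).2)

lemma erws_Sig_sm (e : ERWS μ p q s) (n : ℕ) : StronglyMeasurable[e.F n] (e.Sig n) := by
  refine Finset.stronglyMeasurable_fun_sum _ fun k hk => ?_
  exact ((e.adapted k (Finset.mem_Icc.mp hk).1).mono (e.F.mono (Finset.mem_Icc.mp hk).2)).pow 2

lemma erws_S_abs (e : ERWS μ p q s) (n : ℕ) (ω : Ω) : |e.S n ω| ≤ n := by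
  refine (Finset.abs_sum_le_sum_abs _ _).trans ?_
  have := Finset.sum_le_card_nsmul (Finset.Icc 1 n) (fun k => |e.X k ω|) 1
    (fun k hk => erws_X_abs e (Finset.mem_Icc.mp hk).1 ω)
  simpa [Nat.card_Icc] using this

lemma erws_Sig_abs (e : ERWS μ p q s) (n : ℕ) (ω : Ω) : |e.Sig n ω| ≤ n := by
  refine (Finset.abs_sum_le_sum_abs _ _).trans ?_
  have := Finset.sum_le_card_nsmul (Finset.Icc 1 n) (fun k => |(e.X k ω) ^ 2|) 1
    (fun k hk => by
      have := erws_X_abs e (Finset.mem_Icc.mp hk).1 ω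
      calc |(e.X k ω) ^ 2| = |e.X k ω| ^ 2 := by rw [abs_pow]
        _ ≤ 1 := by nlinarith [abs_nonneg (e.X k ω)])
  simpa [Nat.card_Icc] using this

lemma bdd_int [IsFiniteMeasure μ] {f : Ω → ℝ} (hf : AEStronglyMeasurable f μ) {C : ℝ}
    (h : ∀ ω, |f ω| ≤ C) : Integrable f μ :=
  Integrable.mono' (integrable_const C) hf (ae_of_all _ fun ω => by
    simpa [Real.norm_eq_abs] using h ω)

lemma tower [IsProbabilityMeasure μ] {m : MeasurableSpace Ω} (hm : m ≤ m0) {f g h : Ω → ℝ}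
    (hf : StronglyMeasurable[m] f) (hfg : Integrable (f * g) μ) (hg : Integrable g μ)
    (hc : μ[g|m] =ᵐ[μ] h) :
    ∫ ω, f ω * g ω ∂μ = ∫ ω, f ω * h ω ∂μ := by
  have h1 : ∫ ω, (f * g) ω ∂μ = ∫ ω, (μ[f * g|m]) ω ∂μ := (integral_condExp hm).symm
  have h2 : μ[f * g|m] =ᵐ[μ] fun ω => f ω * h ω :=
    (condExp_mul_of_stronglyMeasurable_left hf hfg hg).trans
      (hc.mono fun ω hω => by simp only [Pi.mul_apply]; rw [hω])
  exact h1.trans (integral_congr_ae h2)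

end Aux2


/-- the mixed moment of the position and the number of nonzero steps is
`E[S_n Σ_n] = ((2s-1)/b) (Γ(n+a+b)/(Γ(n)Γ(a+b)) − a Γ(n+a)/(Γ(n)Γ(a+1)))`,
where `a = p - q` and `b = p + q`. -/
theorem erws_mixed_moment
    {Ω : Type*} [m0 : MeasurableSpace Ω] {μ : Measure Ω} [IsProbabilityMeasure μ]
    {p q r s : ℝ} (hp : 0 ≤ p) (hq : 0 ≤ q) (hr0 : 0 < r) (hr1 : r < 1)
    (hpqr : p + q + r = 1) (hs0 : 0 ≤ s) (hs1 : s ≤ 1)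
    (e : ERWS μ p q s) :
    ∀ n : ℕ, 1 ≤ n →
      ∫ ω, e.S n ω * e.Sig n ω ∂μ
        = ((2 * s - 1) / (p + q)) *
            (Real.Gamma (n + (p - q) + (p + q)) / (Real.Gamma n * Real.Gamma ((p - q) + (p + q)))
              - (p - q) * Real.Gamma (n + (p - q))
                  / (Real.Gamma n * Real.Gamma ((p - q) + 1))) := by
  have hb : (0 : ℝ) < p + q := by linarith
  have ha1 : (0 : ℝ) < (p - q) + 1 := by linarith
  have hab0 : (0 : ℝ) ≤ (p - q) + (p + q) := by linarith
  -- integrability of the basic objects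
  have intX : ∀ n : ℕ, 1 ≤ n → Integrable (e.X n) μ := fun n hn =>
    bdd_int (erws_X_sm e hn).aestronglyMeasurable (erws_X_abs e hn)
  have intX2 : ∀ n : ℕ, 1 ≤ n → Integrable (fun ω => (e.X n ω) ^ 2) μ := fun n hn =>
    bdd_int ((erws_X_sm e hn).pow 2).aestronglyMeasurable
      (fun ω => by
        have := erws_X_abs e hn ω
        calc |(e.X n ω) ^ 2| = |e.X n ω| ^ 2 := by rw [abs_pow]
          _ ≤ 1 := by nlinarith [abs_nonneg (e.X n ω)])
  have hSsm : ∀ n : ℕ, StronglyMeasurable (e.S n) := fun n => (erws_S_sm e n).mono (e.F.le n)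
  have hSigsm : ∀ n : ℕ, StronglyMeasurable (e.Sig n) := fun n => (erws_Sig_sm e n).mono (e.F.le n)
  have intS : ∀ n : ℕ, Integrable (e.S n) μ := fun n =>
    bdd_int (hSsm n).aestronglyMeasurable (erws_S_abs e n)
  have intSSig : ∀ n : ℕ, Integrable (fun ω => e.S n ω * e.Sig n ω) μ := fun n =>
    bdd_int ((hSsm n).mul (hSigsm n)).aestronglyMeasurable (C := (n : ℝ) * n)
      (fun ω => by
        rw [abs_mul]
        exact mul_le_mul (erws_S_abs e n ω) (erws_Sig_abs e n ω) (abs_nonneg _)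
          (Nat.cast_nonneg n))
  -- the basic recurrence for the integrals
  have hEX : ∀ n : ℕ, 1 ≤ n →
      ∫ ω, e.X (n + 1) ω ∂μ = ((p - q) / n) * ∫ ω, e.S n ω ∂μ := by
    intro n hn
    calc ∫ ω, e.X (n + 1) ω ∂μ = ∫ ω, (μ[e.X (n + 1)|e.F n]) ω ∂μ :=
          (integral_condExp (e.F.le n)).symm
      _ = ∫ ω, (p - q) * (∑ k ∈ Finset.Icc 1 n, e.X k ω) / ↑n ∂μ :=
          integral_congr_ae (e.cond_one n hn)
      _ = ∫ ω, ((p - q) / ↑n) * e.S n ω ∂μ := by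
          refine integral_congr_ae (ae_of_all _ fun ω => ?_)
          simp only [ERWS.S]; ring
      _ = ((p - q) / n) * ∫ ω, e.S n ω ∂μ := integral_const_mul _ _
  have hSX2 : ∀ n : ℕ, 1 ≤ n →
      ∫ ω, e.S n ω * (e.X (n + 1) ω) ^ 2 ∂μ
        = ((p + q) / n) * ∫ ω, e.S n ω * e.Sig n ω ∂μ := by
    intro n hn
    have hmul : Integrable (e.S n * fun ω => (e.X (n + 1) ω) ^ 2) μ :=
      bdd_int ((hSsm n).mul ((erws_X_sm e (Nat.le_add_left 1 n)).pow 2)).aestronglyMeasurable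
        (C := (n : ℝ)) (fun ω => by
          simp only [Pi.mul_apply]
          rw [abs_mul]
          have h1 := erws_S_abs e n ω
          have h2 : |(e.X (n + 1) ω) ^ 2| ≤ 1 := by
            have := erws_X_abs e (Nat.le_add_left 1 n) ω
            calc |(e.X (n + 1) ω) ^ 2| = |e.X (n + 1) ω| ^ 2 := by rw [abs_pow]
              _ ≤ 1 := by nlinarith [abs_nonneg (e.X (n + 1) ω)]
          nlinarith [abs_nonneg (e.S n ω)])
    have ht := tower (e.F.le n) (h := fun ω => (p + q) * e.Sig n ω / ↑n)
      (erws_S_sm e n) hmul (intX2 (n + 1) (Nat.le_add_left 1 n)) (e.cond_two n hn)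
    rw [ht]
    calc ∫ ω, e.S n ω * ((p + q) * e.Sig n ω / ↑n) ∂μ
        = ∫ ω, ((p + q) / ↑n) * (e.S n ω * e.Sig n ω) ∂μ := by
          refine integral_congr_ae (ae_of_all _ fun ω => ?_); ring
      _ = ((p + q) / n) * ∫ ω, e.S n ω * e.Sig n ω ∂μ := integral_const_mul _ _
  have hSigX : ∀ n : ℕ, 1 ≤ n →
      ∫ ω, e.Sig n ω * e.X (n + 1) ω ∂μ
        = ((p - q) / n) * ∫ ω, e.S n ω * e.Sig n ω ∂μ := by
    intro n hn
    have hmul : Integrable (e.Sig n * e.X (n + 1)) μ :=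
      bdd_int ((hSigsm n).mul (erws_X_sm e (Nat.le_add_left 1 n))).aestronglyMeasurable
        (C := (n : ℝ)) (fun ω => by
          simp only [Pi.mul_apply]
          rw [abs_mul]
          have h1 := erws_Sig_abs e n ω
          have h2 := erws_X_abs e (Nat.le_add_left 1 n) ω
          nlinarith [abs_nonneg (e.Sig n ω)])
    have ht := tower (e.F.le n) (h := fun ω => (p - q) * e.S n ω / ↑n)
      (erws_Sig_sm e n) hmul (intX (n + 1) (Nat.le_add_left 1 n)) (e.cond_one n hn)
    rw [ht]
    calc ∫ ω, e.Sig n ω * ((p - q) * e.S n ω / ↑n) ∂μ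
        = ∫ ω, ((p - q) / ↑n) * (e.S n ω * e.Sig n ω) ∂μ := by
          refine integral_congr_ae (ae_of_all _ fun ω => ?_); ring
      _ = ((p - q) / n) * ∫ ω, e.S n ω * e.Sig n ω ∂μ := integral_const_mul _ _
  -- recurrence for the mean of S
  have hrecS : ∀ n : ℕ, 1 ≤ n →
      ∫ ω, e.S (n + 1) ω ∂μ = (1 + (p - q) / n) * ∫ ω, e.S n ω ∂μ := by
    intro n hn
    have hpt : ∀ ω, e.S (n + 1) ω = e.S n ω + e.X (n + 1) ω := fun ω => by
      simp only [ERWS.S]; exact Finset.sum_Icc_succ_top (Nat.le_add_left 1 n) _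
    calc ∫ ω, e.S (n + 1) ω ∂μ = ∫ ω, (e.S n ω + e.X (n + 1) ω) ∂μ :=
          integral_congr_ae (ae_of_all _ hpt)
      _ = (∫ ω, e.S n ω ∂μ) + ∫ ω, e.X (n + 1) ω ∂μ :=
          integral_add (intS n) (intX (n + 1) (Nat.le_add_left 1 n))
      _ = (1 + (p - q) / n) * ∫ ω, e.S n ω ∂μ := by rw [hEX n hn]; ring
  -- recurrence for the mixed moment
  have intSX2' : ∀ n : ℕ, Integrable (fun ω => e.S n ω * (e.X (n + 1) ω) ^ 2) μ := by
    intro n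
    refine bdd_int ((hSsm n).mul ((erws_X_sm e (Nat.le_add_left 1 n)).pow 2)).aestronglyMeasurable
      (C := (n : ℝ)) (fun ω => ?_)
    rw [abs_mul]
    have h1 := erws_S_abs e n ω
    have h2 : |(e.X (n + 1) ω) ^ 2| ≤ 1 := by
      have := erws_X_abs e (Nat.le_add_left 1 n) ω
      calc |(e.X (n + 1) ω) ^ 2| = |e.X (n + 1) ω| ^ 2 := by rw [abs_pow]
        _ ≤ 1 := by nlinarith [abs_nonneg (e.X (n + 1) ω)]
    nlinarith [abs_nonneg (e.S n ω)]
  have intSigX' : ∀ n : ℕ, Integrable (fun ω => e.Sig n ω * e.X (n + 1) ω) μ := by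
    intro n
    refine bdd_int ((hSigsm n).mul (erws_X_sm e (Nat.le_add_left 1 n))).aestronglyMeasurable
      (C := (n : ℝ)) (fun ω => ?_)
    rw [abs_mul]
    have h1 := erws_Sig_abs e n ω
    have h2 := erws_X_abs e (Nat.le_add_left 1 n) ω
    nlinarith [abs_nonneg (e.Sig n ω)]
  have hrecM : ∀ n : ℕ, 1 ≤ n →
      ∫ ω, e.S (n + 1) ω * e.Sig (n + 1) ω ∂μ
        = (1 + ((p - q) + (p + q)) / n) * (∫ ω, e.S n ω * e.Sig n ω ∂μ)
            + ((p - q) / n) * ∫ ω, e.S n ω ∂μ := by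
    intro n hn
    have hpt : ∀ ω, e.S (n + 1) ω * e.Sig (n + 1) ω
        = e.S n ω * e.Sig n ω + e.S n ω * (e.X (n + 1) ω) ^ 2
            + e.Sig n ω * e.X (n + 1) ω + e.X (n + 1) ω := by
      intro ω
      have h3 : e.X (n + 1) ω * (e.X (n + 1) ω) ^ 2 = e.X (n + 1) ω := by
        rcases e.val_mem (n + 1) (Nat.le_add_left 1 n) ω with h | h | h <;> rw [h] <;> norm_num
      simp only [ERWS.S, ERWS.Sig]
      rw [Finset.sum_Icc_succ_top (Nat.le_add_left 1 n), Finset.sum_Icc_succ_top (Nat.le_add_left 1 n)]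
      linear_combination h3
    calc ∫ ω, e.S (n + 1) ω * e.Sig (n + 1) ω ∂μ
        = ∫ ω, (e.S n ω * e.Sig n ω + e.S n ω * (e.X (n + 1) ω) ^ 2
            + e.Sig n ω * e.X (n + 1) ω + e.X (n + 1) ω) ∂μ :=
          integral_congr_ae (ae_of_all _ hpt)
      _ = (∫ ω, (e.S n ω * e.Sig n ω + e.S n ω * (e.X (n + 1) ω) ^ 2
            + e.Sig n ω * e.X (n + 1) ω) ∂μ) + ∫ ω, e.X (n + 1) ω ∂μ :=
          integral_add (((intSSig n).add (intSX2' n)).add (intSigX' n))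
            (intX (n + 1) (Nat.le_add_left 1 n))
      _ = ((∫ ω, (e.S n ω * e.Sig n ω + e.S n ω * (e.X (n + 1) ω) ^ 2) ∂μ)
            + ∫ ω, e.Sig n ω * e.X (n + 1) ω ∂μ) + ∫ ω, e.X (n + 1) ω ∂μ := by
          rw [show (∫ ω, (e.S n ω * e.Sig n ω + e.S n ω * (e.X (n + 1) ω) ^ 2
            + e.Sig n ω * e.X (n + 1) ω) ∂μ)
              = (∫ ω, (e.S n ω * e.Sig n ω + e.S n ω * (e.X (n + 1) ω) ^ 2) ∂μ)
                + ∫ ω, e.Sig n ω * e.X (n + 1) ω ∂μ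
            from integral_add ((intSSig n).add (intSX2' n)) (intSigX' n)]
      _ = (((∫ ω, e.S n ω * e.Sig n ω ∂μ) + ∫ ω, e.S n ω * (e.X (n + 1) ω) ^ 2 ∂μ)
            + ∫ ω, e.Sig n ω * e.X (n + 1) ω ∂μ) + ∫ ω, e.X (n + 1) ω ∂μ := by
          rw [show (∫ ω, (e.S n ω * e.Sig n ω + e.S n ω * (e.X (n + 1) ω) ^ 2) ∂μ)
              = (∫ ω, e.S n ω * e.Sig n ω ∂μ) + ∫ ω, e.S n ω * (e.X (n + 1) ω) ^ 2 ∂μ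
            from integral_add (intSSig n) (intSX2' n)]
      _ = (1 + ((p - q) + (p + q)) / n) * (∫ ω, e.S n ω * e.Sig n ω ∂μ)
            + ((p - q) / n) * ∫ ω, e.S n ω ∂μ := by
          rw [hSX2 n hn, hSigX n hn, hEX n hn]; ring
  -- the first step
  have hX1 : ∫ ω, e.X 1 ω ∂μ = 2 * s - 1 := by
    have hA : MeasurableSet {ω | e.X 1 ω = 1} :=
      (erws_X_sm e le_rfl).measurable (measurableSet_singleton 1)
    have hB : MeasurableSet {ω | e.X 1 ω = -1} :=
      (erws_X_sm e le_rfl).measurable (measurableSet_singleton (-1))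
    have hptw : ∀ ω, e.X 1 ω
        = Set.indicator {ω | e.X 1 ω = 1} (fun _ => (1 : ℝ)) ω
            - Set.indicator {ω | e.X 1 ω = -1} (fun _ => (1 : ℝ)) ω := by
      intro ω
      simp only [Set.indicator_apply, Set.mem_setOf_eq]
      rcases e.val_mem 1 le_rfl ω with h | h | h <;> norm_num [h]
    rw [integral_congr_ae (ae_of_all _ hptw),
      integral_sub ((integrable_const (1 : ℝ)).indicator hA)
        ((integrable_const (1 : ℝ)).indicator hB),
      integral_indicator_const _ hA, integral_indicator_const _ hB,
      measureReal_def, measureReal_def, e.init_one, e.init_neg, ENNReal.toReal_ofReal hs0, ENNReal.toReal_ofReal (by linarith)]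
    simp; ring
  have hS1 : ∫ ω, e.S 1 ω ∂μ = 2 * s - 1 := by
    rw [← hX1]
    refine integral_congr_ae (ae_of_all _ fun ω => ?_)
    simp [ERWS.S]
  have hM1 : ∫ ω, e.S 1 ω * e.Sig 1 ω ∂μ = 2 * s - 1 := by
    rw [← hX1]
    refine integral_congr_ae (ae_of_all _ fun ω => ?_)
    simp only [ERWS.S, ERWS.Sig, Finset.Icc_self, Finset.sum_singleton]
    rcases e.val_mem 1 le_rfl ω with h | h | h <;> simp [h]
  -- the closed forms, by induction
  have hGa1 : (0 : ℝ) < Real.Gamma ((p - q) + 1) := Real.Gamma_pos_of_pos ha1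
  have key : ∀ n : ℕ, 1 ≤ n →
      (∫ ω, e.S n ω ∂μ
          = (2 * s - 1) * (Real.Gamma (↑n + (p - q)) / (Real.Gamma ↑n * Real.Gamma ((p - q) + 1))))
        ∧ ∫ ω, e.S n ω * e.Sig n ω ∂μ
          = ((2 * s - 1) / (p + q)) *
              (Real.Gamma (↑n + (p - q) + (p + q))
                  / (Real.Gamma ↑n * Real.Gamma ((p - q) + (p + q)))
                - (p - q) * Real.Gamma (↑n + (p - q))
                    / (Real.Gamma ↑n * Real.Gamma ((p - q) + 1))) := by
    intro n hn
    induction n, hn using Nat.le_induction with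
    | base =>
      constructor
      · rw [hS1, Nat.cast_one, Real.Gamma_one, one_mul,
          show (1 : ℝ) + (p - q) = (p - q) + 1 by ring, div_self hGa1.ne', mul_one]
      · rw [hM1, Nat.cast_one, Real.Gamma_one, one_mul, one_mul,
          show (1 : ℝ) + (p - q) = (p - q) + 1 by ring,
          show (p - q) + 1 + (p + q) = ((p - q) + (p + q)) + 1 by ring]
        rw [mul_div_assoc (p - q), div_self hGa1.ne', mul_one]
        rcases hab0.eq_or_lt with h | h
        · rw [← h, zero_add, Real.Gamma_one, Real.Gamma_zero, div_zero]
          have hqp : p - q = -(p + q) := by linarith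
          rw [hqp]
          field_simp
          ring
        · rw [Real.Gamma_add_one (ne_of_gt h),
            mul_div_assoc, div_self (Real.Gamma_pos_of_pos h).ne', mul_one]
          field_simp
          ring
    | succ n hn ih =>
      obtain ⟨ih1, ih2⟩ := ih
      have hn0 : (0 : ℝ) < (n : ℝ) := by
        have : (1 : ℝ) ≤ (n : ℝ) := by exact_mod_cast hn
        linarith
      have hn1 : (1 : ℝ) ≤ (n : ℝ) := by exact_mod_cast hn
      have hGn : (0 : ℝ) < Real.Gamma ↑n := Real.Gamma_pos_of_pos hn0
      have hgn : Real.Gamma ((n : ℝ) + 1) = ↑n * Real.Gamma ↑n := Real.Gamma_add_one hn0.ne'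
      have hgna : Real.Gamma ((n : ℝ) + 1 + (p - q))
          = (↑n + (p - q)) * Real.Gamma (↑n + (p - q)) := by
        rw [show (n : ℝ) + 1 + (p - q) = (↑n + (p - q)) + 1 by ring,
          Real.Gamma_add_one (ne_of_gt (by linarith [hn1] : (0 : ℝ) < ↑n + (p - q)))]
      have hF : Real.Gamma ((n : ℝ) + 1 + (p - q) + (p + q))
            / (Real.Gamma ((n : ℝ) + 1) * Real.Gamma ((p - q) + (p + q)))
          = ((↑n + (p - q) + (p + q)) / ↑n) *
              (Real.Gamma (↑n + (p - q) + (p + q))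
                / (Real.Gamma ↑n * Real.Gamma ((p - q) + (p + q)))) := by
        rw [show (n : ℝ) + 1 + (p - q) + (p + q) = (↑n + (p - q) + (p + q)) + 1 by ring,
          Real.Gamma_add_one (ne_of_gt (by linarith [hn1] : (0 : ℝ) < ↑n + (p - q) + (p + q))),
          hgn, div_mul_div_comm, mul_assoc]
      constructor
      · rw [hrecS n hn, ih1]
        push_cast
        rw [hgna, hgn]
        field_simp
      · rw [hrecM n hn, ih1, ih2]
        push_cast
        rw [hF, hgna, hgn]
        generalize (Real.Gamma ((n : ℝ) + (p - q) + (p + q))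
          / (Real.Gamma (n : ℝ) * Real.Gamma ((p - q) + (p + q)))) = U
        field_simp
        ring
  exact fun n hn => (key n hn).2
end
end

section
/- Let a ∈ (-1, 1) and b ∈ (0, 1) with 2a < b, and set a_k = Γ(k)Γ(a+1)/Γ(k+a) and b_k = Γ(k)Γ(b+1)/Γ(k+b) for k ≥ 1. Then lim_{n→∞} n^{2a - b} · Σ_{k=1}^{n} a_k² / (k·b_k) = (Γ(a+1))² / ((b - 2a)·Γ(b + 1)). -/
open Filter Real Topology

noncomputable section

/-- `a_k = Γ(k)Γ(a+1)/Γ(k+a)`. -/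
def aseq (a : ℝ) (k : ℕ) : ℝ := Real.Gamma k * Real.Gamma (a + 1) / Real.Gamma (k + a)

/-- `b_k = Γ(k)Γ(b+1)/Γ(k+b)`. -/
def bseq (b : ℝ) (k : ℕ) : ℝ := Real.Gamma k * Real.Gamma (b + 1) / Real.Gamma (k + b)


lemma prod_eq_Gamma {c : ℝ} (hc : 0 < c) (n : ℕ) :
    ∏ j ∈ Finset.range (n + 1), (c + j) = Real.Gamma (c + n + 1) / Real.Gamma c := by
  induction n with
  | zero =>
      simp only [zero_add, Finset.prod_range_one, Nat.cast_zero, add_zero, Nat.cast_zero]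
      rw [Real.Gamma_add_one hc.ne']
      field_simp [(Real.Gamma_pos_of_pos hc).ne']
  | succ n ih =>
      rw [Finset.prod_range_succ, ih]
      have h1 : (0:ℝ) < c + (n + 1) := by positivity
      have : Real.Gamma (c + (n+1) + 1) = (c + (n+1)) * Real.Gamma (c + (n+1)) := by
        rw [Real.Gamma_add_one h1.ne']
      push_cast
      rw [this]
      have h2 : c + (↑n + 1) = c + ↑n + 1 := by ring
      rw [h2]
      ring

lemma gammaSeq_eq {c : ℝ} (hc : 0 < c) (n : ℕ) :
    Real.GammaSeq c n = (n:ℝ) ^ c * Real.Gamma (n + 1) * Real.Gamma c / Real.Gamma (↑n + 1 + c) := by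
  rw [Real.GammaSeq, prod_eq_Gamma hc n, Real.Gamma_nat_eq_factorial]
  rw [div_div_eq_mul_div]
  have : c + ↑n + 1 = ↑n + 1 + c := by ring
  rw [this]

lemma tendsto_nat_succ_div : Tendsto (fun n : ℕ => ((n:ℝ) + 1) / n) atTop (𝓝 1) := by
  have h : Tendsto (fun n : ℕ => 1 + 1 / (n:ℝ)) atTop (𝓝 1) := by
    simpa using tendsto_const_nhds.add (tendsto_one_div_atTop_nhds_zero_nat (𝕜 := ℝ))
  refine h.congr' ?_
  filter_upwards [eventually_gt_atTop 0] with n hn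
  have : (n:ℝ) ≠ 0 := by positivity
  field_simp

lemma tendsto_nat_succ_div_rpow (c : ℝ) :
    Tendsto (fun n : ℕ => ((n:ℝ) + 1) ^ c / (n:ℝ) ^ c) atTop (𝓝 1) := by
  have h := tendsto_nat_succ_div.rpow_const (p := c) (Or.inl one_ne_zero)
  rw [Real.one_rpow] at h
  refine h.congr' ?_
  filter_upwards [eventually_gt_atTop 0] with n hn
  have hn' : (0:ℝ) < n := by exact_mod_cast hn
  rw [Real.div_rpow (by positivity) hn'.le]

lemma gamma_ratio_pos {c : ℝ} (hc : 0 < c) :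
    Tendsto (fun n : ℕ => Real.Gamma n * (n:ℝ) ^ c / Real.Gamma (↑n + c)) atTop (𝓝 1) := by
  have hΓc := (Real.Gamma_pos_of_pos hc).ne'
  have h1 : Tendsto (fun n : ℕ => (n:ℝ) ^ c * Real.Gamma (n + 1) / Real.Gamma (↑n + 1 + c))
      atTop (𝓝 1) := by
    have h := (Real.GammaSeq_tendsto_Gamma c).div_const (Real.Gamma c)
    rw [div_self hΓc] at h
    refine h.congr ?_
    intro n
    rw [gammaSeq_eq hc n]
    field_simp
  rw [← tendsto_add_atTop_iff_nat 1]
  have h2 : Tendsto (fun n : ℕ =>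
      ((n:ℝ) ^ c * Real.Gamma (n + 1) / Real.Gamma (↑n + 1 + c)) * (((n:ℝ) + 1) ^ c / (n:ℝ) ^ c))
      atTop (𝓝 1) := by simpa using h1.mul (tendsto_nat_succ_div_rpow c)
  refine h2.congr' ?_
  filter_upwards [eventually_gt_atTop 0] with n hn
  have hn' : (0:ℝ) < n := by exact_mod_cast hn
  have hne : (n:ℝ) ^ c ≠ 0 := by positivity
  push_cast
  field_simp

lemma gamma_ratio {c : ℝ} (hc : -1 < c) :
    Tendsto (fun n : ℕ => Real.Gamma n * (n:ℝ) ^ c / Real.Gamma (↑n + c)) atTop (𝓝 1) := by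
  rcases lt_or_ge 0 c with hc0 | hc0
  · exact gamma_ratio_pos hc0
  · have hc1 : 0 < c + 1 := by linarith
    have h1 := gamma_ratio_pos hc1
    have h2 : Tendsto (fun n : ℕ => ((n:ℝ) + c) / n) atTop (𝓝 1) := by
      have h : Tendsto (fun n : ℕ => 1 + c / (n:ℝ)) atTop (𝓝 1) := by
        simpa using tendsto_const_nhds.add (tendsto_const_div_atTop_nhds_zero_nat c)
      refine h.congr' ?_
      filter_upwards [eventually_gt_atTop 0] with n hn
      have : (n:ℝ) ≠ 0 := by
        have : (0:ℝ) < n := by exact_mod_cast hn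
        positivity
      field_simp
    have h3 := h1.mul h2
    rw [mul_one] at h3
    refine h3.congr' ?_
    filter_upwards [eventually_gt_atTop 0] with n hn
    have hn' : (0:ℝ) < n := by exact_mod_cast hn
    have hn1 : (1:ℝ) ≤ n := by exact_mod_cast hn
    have hkc : (0:ℝ) < (n:ℝ) + c := by linarith
    have hΓ : Real.Gamma ((n:ℝ) + c + 1) = ((n:ℝ) + c) * Real.Gamma ((n:ℝ) + c) :=
      Real.Gamma_add_one hkc.ne'
    have hrw : (n:ℝ) + (c + 1) = (n:ℝ) + c + 1 := by ring
    rw [hrw, hΓ]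
    have hr : (n:ℝ) ^ (c + 1) = (n:ℝ) ^ c * n := by
      rw [Real.rpow_add_one hn'.ne']
    rw [hr]
    have hΓne : Real.Gamma ((n:ℝ) + c) ≠ 0 := (Real.Gamma_pos_of_pos hkc).ne'
    field_simp


lemma tendsto_gdiff {s : ℝ} (hs : 0 < s) :
    Tendsto (fun k : ℕ => (((k:ℝ) + 1) ^ s - (k:ℝ) ^ s) / (k:ℝ) ^ (s - 1)) atTop (𝓝 s) := by
  have hd : HasDerivAt (fun x : ℝ => x ^ s) (s * (1:ℝ) ^ (s - 1)) 1 :=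
    Real.hasDerivAt_rpow_const (Or.inl one_ne_zero)
  rw [hasDerivAt_iff_tendsto_slope] at hd
  have hval : s * (1:ℝ) ^ (s-1) = s := by rw [Real.one_rpow, mul_one]
  rw [hval] at hd
  have hseq : Tendsto (fun k : ℕ => 1 + 1 / (k:ℝ)) atTop (𝓝[≠] (1:ℝ)) := by
    apply tendsto_nhdsWithin_of_tendsto_nhds_of_eventually_within
    · simpa using tendsto_const_nhds.add (tendsto_one_div_atTop_nhds_zero_nat (𝕜 := ℝ))
    · filter_upwards [eventually_gt_atTop 0] with k hk
      have hk' : (0:ℝ) < k := by exact_mod_cast hk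
      have : (0:ℝ) < 1 / k := by positivity
      simp only [Set.mem_compl_iff, Set.mem_singleton_iff]
      intro h
      nlinarith
  have hcomp := hd.comp hseq
  refine hcomp.congr' ?_
  filter_upwards [eventually_gt_atTop 0] with k hk
  have hk' : (0:ℝ) < k := by exact_mod_cast hk
  have hmul : ((k:ℝ) + 1) ^ s = (k:ℝ) ^ s * (1 + 1/(k:ℝ)) ^ s := by
    rw [← Real.mul_rpow hk'.le (by positivity)]
    congr 1
    field_simp
  have hks : (k:ℝ) ^ (s-1) = (k:ℝ) ^ s / k := by
    rw [Real.rpow_sub hk', Real.rpow_one]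
  have hkse : (k:ℝ) ^ s ≠ 0 := by positivity
  simp only [Function.comp_apply, slope_def_field, Real.one_rpow]
  rw [hmul, hks]
  field_simp
  ring

lemma sum_asymp {s : ℝ} (hs : 0 < s) {c : ℕ → ℝ} {L : ℝ}
    (h : Tendsto (fun k : ℕ => c k / (k:ℝ) ^ (s - 1)) atTop (𝓝 L)) :
    Tendsto (fun n : ℕ => ((n:ℝ) ^ s)⁻¹ * ∑ k ∈ Finset.Icc 1 n, c k) atTop (𝓝 (L / s)) := by
  set g : ℕ → ℝ := fun k => ((k:ℝ) + 1) ^ s - (k:ℝ) ^ s with hg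
  have hgpos : ∀ k, 0 < g k := by
    intro k
    have : (k:ℝ) ^ s < ((k:ℝ) + 1) ^ s :=
      Real.rpow_lt_rpow (by positivity) (by linarith) hs
    simpa [hg] using sub_pos.mpr this
  have hgsum : ∀ n : ℕ, ∑ k ∈ Finset.range n, g k = (n:ℝ) ^ s := by
    intro n
    have := Finset.sum_range_sub (f := fun k : ℕ => ((k:ℝ)) ^ s) n
    simp only [Nat.cast_zero] at this
    rw [Real.zero_rpow hs.ne', sub_zero] at this
    rw [← this]
    apply Finset.sum_congr rfl
    intro k _
    push_cast
    rfl
  -- c (k+1) / g k → L / s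
  have hsucc : Tendsto (fun k : ℕ => c (k+1) / ((k:ℝ)+1) ^ (s-1)) atTop (𝓝 L) := by
    have := (tendsto_add_atTop_iff_nat 1).mpr h
    refine this.congr ?_
    intro k
    push_cast
    rfl
  have hrat : Tendsto (fun k : ℕ => ((k:ℝ)+1) ^ (s-1) / (k:ℝ) ^ (s-1)) atTop (𝓝 1) :=
    tendsto_nat_succ_div_rpow (s-1)
  have hgd := tendsto_gdiff hs
  have hgdne : Tendsto (fun k : ℕ => (k:ℝ) ^ (s-1) / g k) atTop (𝓝 s⁻¹) := by
    have := hgd.inv₀ hs.ne'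
    refine this.congr' ?_
    filter_upwards [eventually_gt_atTop 0] with k hk
    have hk' : (0:ℝ) < k := by exact_mod_cast hk
    rw [inv_div]
  have hmain : Tendsto (fun k : ℕ => c (k+1) / g k) atTop (𝓝 (L / s)) := by
    have h3 := (hsucc.mul hrat).mul hgdne
    have hval : L * 1 * s⁻¹ = L / s := by rw [mul_one, div_eq_mul_inv]
    rw [hval] at h3
    refine h3.congr' ?_
    filter_upwards [eventually_gt_atTop 0] with k hk
    have hk' : (0:ℝ) < k := by exact_mod_cast hk
    have h1 : ((k:ℝ)+1) ^ (s-1) ≠ 0 := by positivity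
    have h2 : ((k:ℝ)) ^ (s-1) ≠ 0 := by positivity
    have h4 : g k ≠ 0 := (hgpos k).ne'
    field_simp
  -- little-o
  have hlo : (fun k : ℕ => c (k+1) - (L/s) * g k) =o[atTop] g := by
    rw [Asymptotics.isLittleO_iff_tendsto (fun k hk => absurd hk (hgpos k).ne')]
    have := hmain.sub (tendsto_const_nhds (x := L/s))
    rw [sub_self] at this
    refine this.congr ?_
    intro k
    have h4 : g k ≠ 0 := (hgpos k).ne'
    rw [sub_div, mul_div_assoc, div_self h4, mul_one]
  have hgtop : Tendsto (fun n : ℕ => ∑ k ∈ Finset.range n, g k) atTop atTop := by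
    have : Tendsto (fun n : ℕ => (n:ℝ) ^ s) atTop atTop :=
      (tendsto_rpow_atTop hs).comp tendsto_natCast_atTop_atTop
    exact this.congr (fun n => (hgsum n).symm)
  have hsum := hlo.sum_range (fun k => (hgpos k).le) hgtop
  have hdiv : Tendsto (fun n : ℕ =>
      (∑ k ∈ Finset.range n, (c (k+1) - (L/s) * g k)) / (n:ℝ) ^ s) atTop (𝓝 0) := by
    have := hsum.tendsto_div_nhds_zero
    refine this.congr ?_
    intro n
    rw [hgsum]
  have hfin := hdiv.add (tendsto_const_nhds (x := L/s))
  rw [zero_add] at hfin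
  refine hfin.congr' ?_
  filter_upwards [eventually_gt_atTop 0] with n hn
  have hn' : (0:ℝ) < n := by exact_mod_cast hn
  have hns : (0:ℝ) < (n:ℝ) ^ s := by positivity
  have hIcc : ∑ k ∈ Finset.Icc 1 n, c k = ∑ k ∈ Finset.range n, c (k+1) := by
    rw [← Finset.Ico_add_one_right_eq_Icc, Finset.sum_Ico_eq_sum_range]
    simp [add_comm]
  rw [Finset.sum_sub_distrib, ← Finset.mul_sum, hgsum, sub_div, hIcc]
  rw [mul_div_assoc, div_self hns.ne']
  field_simp
  ring

/-- for `a ∈ (-1,1)`, `b ∈ (0,1)` with `2a < b`,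
`n^{2a-b} ∑_{k=1}^n a_k²/(k b_k) → (Γ(a+1))²/((b-2a) Γ(b+1))`. -/
theorem vn_asymptotics {a b : ℝ} (ha1 : -1 < a) (ha2 : a < 1) (hb0 : 0 < b) (hb1 : b < 1)
    (hab : 2 * a < b) :
    Tendsto
      (fun n : ℕ => (n : ℝ) ^ (2 * a - b) *
        ∑ k ∈ Finset.Icc 1 n, (aseq a k) ^ 2 / (k * bseq b k))
      atTop
      (𝓝 ((Real.Gamma (a + 1)) ^ 2 / ((b - 2 * a) * Real.Gamma (b + 1)))) := by
  set s : ℝ := b - 2 * a with hsdef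
  have hs : 0 < s := by simp [hsdef]; linarith
  set L : ℝ := Real.Gamma (a + 1) ^ 2 / Real.Gamma (b + 1) with hLdef
  set c : ℕ → ℝ := fun k => (aseq a k) ^ 2 / (k * bseq b k) with hcdef
  have hΓb1 : (0:ℝ) < Real.Gamma (b + 1) := Real.Gamma_pos_of_pos (by linarith)
  -- the ratio limit
  have hratio : Tendsto (fun k : ℕ => c k / (k:ℝ) ^ (s - 1)) atTop (𝓝 L) := by
    have Ra := gamma_ratio (c := a) ha1
    have Rb := gamma_ratio (c := b) (by linarith)
    have h1 := ((Ra.pow 2).div Rb one_ne_zero).const_mul L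
    rw [one_pow, div_one, mul_one] at h1
    refine h1.congr' ?_
    filter_upwards [eventually_gt_atTop 0] with k hk
    have hk' : (0:ℝ) < k := by exact_mod_cast hk
    have hk1 : (1:ℝ) ≤ k := by exact_mod_cast hk
    have hka : (0:ℝ) < (k:ℝ) + a := by linarith
    have hkb : (0:ℝ) < (k:ℝ) + b := by linarith
    have hΓk : (0:ℝ) < Real.Gamma k := Real.Gamma_pos_of_pos hk'
    have hΓka : (0:ℝ) < Real.Gamma ((k:ℝ) + a) := Real.Gamma_pos_of_pos hka
    have hΓkb : (0:ℝ) < Real.Gamma ((k:ℝ) + b) := Real.Gamma_pos_of_pos hkb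
    have hrpA : (0:ℝ) < (k:ℝ) ^ a := Real.rpow_pos_of_pos hk' a
    have hrpB : (0:ℝ) < (k:ℝ) ^ b := Real.rpow_pos_of_pos hk' b
    have hrpS : (0:ℝ) < (k:ℝ) ^ (s - 1) := Real.rpow_pos_of_pos hk' _
    have key : (k:ℝ) ^ a * ((k:ℝ) ^ a * ((k:ℝ) ^ (s - 1) * (k:ℝ))) = (k:ℝ) ^ b := by
      rw [← Real.rpow_add_one hk'.ne', ← Real.rpow_add hk', ← Real.rpow_add hk']
      congr 1
      simp [hsdef]
      ring
    simp only [hcdef, hLdef, aseq, bseq, Pi.div_apply]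
    field_simp
    rw [← key]
    ring
  have hmain := sum_asymp hs hratio
  have hval : L / s = Real.Gamma (a + 1) ^ 2 / ((b - 2 * a) * Real.Gamma (b + 1)) := by
    rw [hLdef, hsdef, div_div, mul_comm]
  rw [hval] at hmain
  refine hmain.congr' ?_
  filter_upwards [eventually_gt_atTop 0] with n hn
  have hn' : (0:ℝ) < n := by exact_mod_cast hn
  have : (n:ℝ) ^ (2 * a - b) = ((n:ℝ) ^ s)⁻¹ := by
    rw [← Real.rpow_neg hn'.le, hsdef]
    norm_num
  rw [this]
end
end

section
/- In the diffusive regime p/(1-r) < 3/4, the position of the ERWS satisfies S_n / n → 0 almost surely. -/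
open MeasureTheory Filter Real Topology

noncomputable section

private lemma gap_aux (M : ℕ → ℝ)
    (hstep : ∀ a b : ℕ, a ≤ b → |M b - M a| ≤ 2 * ((b - a : ℕ) : ℝ))
    (hsub : Tendsto (fun n : ℕ => M ((n+1)^2) / (((n+1)^2 : ℕ) : ℝ)) atTop (𝓝 0)) :
    Tendsto (fun n : ℕ => M n / n) atTop (𝓝 0) := by
  set u : ℕ → ℝ := fun n => M (n^2) / ((n^2 : ℕ) : ℝ) with hu_def
  have hu : Tendsto u atTop (𝓝 0) := by
    rw [← tendsto_add_atTop_iff_nat 1]; exact hsub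
  have hsqrt : Tendsto (fun m : ℕ => Nat.sqrt m) atTop atTop := by
    apply tendsto_atTop_atTop.2
    intro b
    exact ⟨b * b, fun m hm => Nat.le_sqrt.2 hm⟩
  have h1 : Tendsto (fun m : ℕ => |u (Nat.sqrt m)|) atTop (𝓝 0) := by
    have := (hu.comp hsqrt).abs
    simpa using this
  have h2 : Tendsto (fun m : ℕ => 4 / ((Nat.sqrt m : ℕ) : ℝ)) atTop (𝓝 0) :=
    tendsto_const_nhds.div_atTop (tendsto_natCast_atTop_atTop.comp hsqrt)
  refine squeeze_zero_norm' ?_ (by simpa using h1.add h2)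
  rw [eventually_atTop]
  refine ⟨1, fun m hm => ?_⟩
  obtain ⟨n, hn_def⟩ : ∃ n, Nat.sqrt m = n := ⟨_, rfl⟩
  rw [hn_def]
  have hn1 : 1 ≤ n := hn_def ▸ Nat.le_sqrt.2 (by omega)
  have hn2 : n^2 ≤ m := by
    have h := Nat.sqrt_le m
    rw [hn_def] at h
    simpa [pow_two] using h
  have hn3 : m - n^2 ≤ 2*n := by
    have h := Nat.lt_succ_sqrt m
    rw [hn_def] at h
    simp only [pow_two]
    simp only [Nat.succ_eq_add_one] at h
    have hc : (n+1)*(n+1) = n*n + 2*n + 1 := by ring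
    rw [hc] at h
    have h2' := hn2
    simp only [pow_two] at h2'
    omega
  have hmpos : (0:ℝ) < m := by exact_mod_cast hm
  have hn2pos : (0:ℝ) < ((n^2 : ℕ) : ℝ) := by positivity
  have hn2m : ((n^2:ℕ):ℝ) ≤ (m:ℝ) := by exact_mod_cast hn2
  have hMm : |M m| ≤ |M (n^2)| + 4*n := by
    have h4 : |M m - M (n^2)| ≤ 2 * ((m - n^2 : ℕ) : ℝ) := hstep _ _ hn2
    have h5 : ((m - n^2 : ℕ) : ℝ) ≤ 2*n := by exact_mod_cast hn3
    calc |M m| = |M (n^2) + (M m - M (n^2))| := by ring_nf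
    _ ≤ |M (n^2)| + |M m - M (n^2)| := abs_add_le _ _
    _ ≤ |M (n^2)| + 4*n := by linarith
  have key : ‖M m / m‖ ≤ |u n| + 4 / ((n:ℕ):ℝ) := by
    have habs : ‖M m / (m:ℝ)‖ = |M m| / m := by
      rw [Real.norm_eq_abs, abs_div, abs_of_pos hmpos]
    rw [habs]
    have e1 : |M m| / m ≤ (|M (n^2)| + 4*n) / m := by gcongr
    have e2 : (|M (n^2)| + 4*(n:ℝ)) / (m:ℝ) ≤ |M (n^2)|/((n^2:ℕ):ℝ) + 4*(n:ℝ)/((n^2:ℕ):ℝ) := by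
      rw [add_div]
      gcongr <;> positivity
    have e3 : |u n| = |M (n^2)| / ((n^2:ℕ):ℝ) := by
      rw [hu_def]
      rw [abs_div, abs_of_pos hn2pos]
    have e4 : 4*(n:ℝ)/((n^2:ℕ):ℝ) = 4/(n:ℝ) := by
      have hnpos : (0:ℝ) < (n:ℝ) := by exact_mod_cast hn1
      push_cast
      field_simp
    linarith
  exact key

private lemma det_aux {α : ℝ} (hα : |α| < 1) (S M : ℕ → ℝ)
    (hSb : ∀ n : ℕ, |S n| ≤ n)
    (hkey : ∀ n : ℕ, S (n+1) = M (n+1) + α * ∑ k ∈ Finset.Icc 1 n, S k / k)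
    (hM : Tendsto (fun n : ℕ => M n / n) atTop (𝓝 0)) :
    Tendsto (fun n : ℕ => S n / n) atTop (𝓝 0) := by
  have hα0 : 0 ≤ |α| := abs_nonneg _
  set β : ℝ := (1 + |α|) / 2 with hβ_def
  have hβ0 : 0 < β := by positivity
  have hβ1 : β < 1 := by rw [hβ_def]; linarith
  have hαβ : |α| < β := by rw [hβ_def]; linarith
  -- each |S k| / k ≤ 1
  have hS1 : ∀ k : ℕ, 1 ≤ k → |S k| / k ≤ 1 := by
    intro k hk
    have hkpos : (0:ℝ) < k := by exact_mod_cast hk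
    rw [div_le_one hkpos]
    exact hSb k
  -- contraction step
  have claim : ∀ c : ℝ, 0 < c → (∃ N : ℕ, ∀ n ≥ N, |S n| ≤ c * n) →
      ∃ N : ℕ, ∀ n ≥ N, |S n| ≤ (β * c) * n := by
    intro c hc ⟨N, hN⟩
    set ε : ℝ := (β - |α|) * c with hε_def
    have hε : 0 < ε := mul_pos (by linarith) hc
    -- eventually |M n| ≤ (ε/2) n  and |α| * N ≤ (ε/2) n
    have hev1 : ∀ᶠ n : ℕ in atTop, |M n / n| < ε / 2 := by
      have h := hM.abs
      rw [abs_zero] at h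
      exact h.eventually (gt_mem_nhds (by positivity : (0:ℝ) < ε / 2))
    have hev2 : ∀ᶠ n : ℕ in atTop, |α| * N ≤ (ε/2) * n := by
      rcases exists_nat_ge ((|α| * N) / (ε/2)) with ⟨K, hK⟩
      rw [eventually_atTop]
      refine ⟨K, fun n hn => ?_⟩
      have h1 : (|α| * N) / (ε/2) ≤ (n:ℝ) := le_trans hK (by exact_mod_cast hn)
      rw [div_le_iff₀ (by positivity)] at h1
      linarith
    rw [eventually_atTop] at hev1 hev2
    obtain ⟨N1, hN1⟩ := hev1
    obtain ⟨N2, hN2⟩ := hev2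
    refine ⟨max (max N1 N2) (N + 1), fun n hn => ?_⟩
    obtain ⟨m, rfl⟩ : ∃ m, n = m + 1 := ⟨n - 1, by omega⟩
    have hmN : N ≤ m := by
      have := le_trans (le_max_right _ _) hn; omega
    have hnpos : (0:ℝ) < ((m+1:ℕ):ℝ) := by positivity
    -- split the sum
    have hsplit : ∑ k ∈ Finset.Icc 1 m, S k / k =
        (∑ k ∈ Finset.Ioc 0 N, S k / k) + ∑ k ∈ Finset.Ioc N m, S k / k := by
      have hio : Finset.Icc 1 m = Finset.Ioc 0 m := by
        ext x; simp only [Finset.mem_Icc, Finset.mem_Ioc]; omega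
      rw [hio, ← Finset.sum_Ioc_consecutive _ (Nat.zero_le N) hmN]
    have hb1 : |∑ k ∈ Finset.Ioc 0 N, S k / k| ≤ N := by
      calc |∑ k ∈ Finset.Ioc 0 N, S k / k| ≤ ∑ k ∈ Finset.Ioc 0 N, |S k / k| :=
        Finset.abs_sum_le_sum_abs _ _
      _ ≤ ∑ k ∈ Finset.Ioc 0 N, 1 := by
          refine Finset.sum_le_sum fun k hk => ?_
          have hk1 : 1 ≤ k := (Finset.mem_Ioc.mp hk).1
          have hkpos : (0:ℝ) < k := by exact_mod_cast hk1
          rw [abs_div, abs_of_pos hkpos]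
          exact hS1 k hk1
      _ = N := by simp
    have hb2 : |∑ k ∈ Finset.Ioc N m, S k / k| ≤ c * m := by
      calc |∑ k ∈ Finset.Ioc N m, S k / k| ≤ ∑ k ∈ Finset.Ioc N m, |S k / k| :=
        Finset.abs_sum_le_sum_abs _ _
      _ ≤ ∑ k ∈ Finset.Ioc N m, c := by
          refine Finset.sum_le_sum fun k hk => ?_
          obtain ⟨hk1, hk2⟩ := Finset.mem_Ioc.mp hk
          have hk1' : 1 ≤ k := by omega
          have hkpos : (0:ℝ) < k := by exact_mod_cast hk1'
          rw [abs_div, abs_of_pos hkpos, div_le_iff₀ hkpos]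
          calc |S k| ≤ c * k := hN k (by omega)
          _ = c * k := rfl
      _ = (Finset.Ioc N m).card * c := by rw [Finset.sum_const, nsmul_eq_mul]
      _ ≤ c * m := by
          rw [Nat.card_Ioc]
          have : ((m - N : ℕ):ℝ) ≤ (m:ℝ) := by
            have : m - N ≤ m := Nat.sub_le _ _
            exact_mod_cast this
          nlinarith
    -- main estimate
    have hMn : |M (m+1)| ≤ (ε/2) * ((m+1:ℕ):ℝ) := by
      have h := hN1 (m+1) (le_trans (le_trans (le_max_left _ _) (le_max_left _ _)) hn)
      rw [abs_div, abs_of_pos hnpos, div_lt_iff₀ hnpos] at h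
      linarith
    have hαN : |α| * N ≤ (ε/2) * ((m+1:ℕ):ℝ) :=
      hN2 (m+1) (le_trans (le_trans (le_max_right _ _) (le_max_left _ _)) hn)
    have hest : |S (m+1)| ≤ |M (m+1)| + |α| * (N + c * m) := by
      rw [hkey m, hsplit]
      calc |M (m+1) + α * ((∑ k ∈ Finset.Ioc 0 N, S k / k) + ∑ k ∈ Finset.Ioc N m, S k / k)|
          ≤ |M (m+1)| + |α| * |(∑ k ∈ Finset.Ioc 0 N, S k / k) + ∑ k ∈ Finset.Ioc N m, S k / k| := by
            refine le_trans (abs_add_le _ _) ?_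
            rw [abs_mul]
      _ ≤ |M (m+1)| + |α| * (N + c * m) := by
            have := abs_add_le (∑ k ∈ Finset.Ioc 0 N, S k / k) (∑ k ∈ Finset.Ioc N m, S k / k)
            nlinarith [abs_nonneg α]
    have hmm : (m:ℝ) ≤ ((m+1:ℕ):ℝ) := by push_cast; linarith
    calc |S (m+1)| ≤ |M (m+1)| + |α| * N + |α| * (c * m) := by linarith
    _ ≤ (ε/2) * ((m+1:ℕ):ℝ) + (ε/2) * ((m+1:ℕ):ℝ) + |α| * c * ((m+1:ℕ):ℝ) := by
        have h0 : (0:ℝ) ≤ |α| * c := by positivity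
        have h1 : |α| * (c * m) ≤ |α| * c * ((m+1:ℕ):ℝ) := by push_cast; nlinarith
        linarith
    _ = (ε + |α| * c) * ((m+1:ℕ):ℝ) := by ring
    _ = (β * c) * ((m+1:ℕ):ℝ) := by rw [hε_def]; ring
  -- iterate
  have hiter : ∀ j : ℕ, ∃ N : ℕ, ∀ n ≥ N, |S n| ≤ β ^ j * n := by
    intro j
    induction j with
    | zero => exact ⟨0, fun n _ => by simpa using hSb n⟩
    | succ i ih =>
      obtain ⟨N, hN⟩ := claim (β ^ i) (by positivity) ih
      exact ⟨N, fun n hn => by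
        have := hN n hn
        calc |S n| ≤ (β * β ^ i) * n := this
        _ = β ^ (i+1) * n := by ring⟩
  -- conclude
  rw [NormedAddCommGroup.tendsto_nhds_zero]
  intro ε hε
  have hpow : Tendsto (fun j : ℕ => β ^ j) atTop (𝓝 0) :=
    tendsto_pow_atTop_nhds_zero_of_lt_one (le_of_lt hβ0) hβ1
  obtain ⟨j, hj⟩ := (hpow.eventually (gt_mem_nhds hε)).exists
  obtain ⟨N, hN⟩ := hiter j
  rw [eventually_atTop]
  refine ⟨max N 1, fun n hn => ?_⟩
  have hn1 : 1 ≤ n := le_trans (le_max_right _ _) hn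
  have hnpos : (0:ℝ) < n := by exact_mod_cast hn1
  have h := hN n (le_trans (le_max_left _ _) hn)
  rw [norm_div, Real.norm_eq_abs, Real.norm_natCast, div_lt_iff₀ hnpos]
  calc |S n| ≤ β ^ j * n := h
  _ < ε * n := by nlinarith


/-- in the diffusive regime `p/(1-r) < 3/4`, `S_n / n → 0` almost surely. -/
theorem erws_diffusive_as_convergence
    {Ω : Type*} [m0 : MeasurableSpace Ω] {μ : Measure Ω} [IsProbabilityMeasure μ]
    {p q r s : ℝ} (hp : 0 ≤ p) (hq : 0 ≤ q) (hr0 : 0 < r) (hr1 : r < 1)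
    (hpqr : p + q + r = 1) (hs0 : 0 ≤ s) (hs1 : s ≤ 1)
    (hdiff : p / (1 - r) < 3 / 4)
    (e : ERWS μ p q s) :
    ∀ᵐ ω ∂μ, Tendsto (fun n : ℕ => e.S n ω / n) atTop (𝓝 0) := by
  classical
  have hα1 : |p - q| < 1 := by rw [abs_lt]; constructor <;> nlinarith
  -- pointwise bounds
  have hXb : ∀ k, 1 ≤ k → ∀ ω, |e.X k ω| ≤ 1 := by
    intro k hk ω; rcases e.val_mem k hk ω with h | h | h <;> rw [h] <;> norm_num
  have hSb : ∀ (n : ℕ) (ω : Ω), |e.S n ω| ≤ n := by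
    intro n ω
    calc |e.S n ω| ≤ ∑ k ∈ Finset.Icc 1 n, |e.X k ω| := Finset.abs_sum_le_sum_abs _ _
    _ ≤ ∑ k ∈ Finset.Icc 1 n, 1 := Finset.sum_le_sum fun k hk => hXb k (Finset.mem_Icc.mp hk).1 ω
    _ = n := by simp
  -- measurability
  have hXm : ∀ k, 1 ≤ k → StronglyMeasurable[m0] (e.X k) :=
    fun k hk => (e.adapted k hk).mono (e.F.le k)
  have hSmF : ∀ n, StronglyMeasurable[e.F n] (e.S n) := by
    intro n
    apply Finset.stronglyMeasurable_fun_sum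
    intro k hk
    obtain ⟨h1, h2⟩ := Finset.mem_Icc.mp hk
    exact (e.adapted k h1).mono (e.F.mono h2)
  -- martingale differences
  set D : ℕ → Ω → ℝ := fun k ω =>
    if k ≤ 1 then e.X 1 ω else e.X k ω - (p - q) * e.S (k-1) ω / ((k-1 : ℕ) : ℝ) with hD_def
  have hD1 : D 1 = e.X 1 := by funext ω; simp [hD_def]
  have hD2 : ∀ m : ℕ, D (m+2) = fun ω => e.X (m+2) ω - (p - q) * e.S (m+1) ω / ((m+1 : ℕ) : ℝ) := by
    intro m; funext ω; simp [hD_def]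
  have hcorrb : ∀ (m : ℕ) (ω : Ω), |(p - q) * e.S (m+1) ω / ((m+1:ℕ):ℝ)| ≤ 1 := by
    intro m ω
    have hpos : (0:ℝ) < ((m+1:ℕ):ℝ) := by positivity
    rw [abs_div, abs_of_pos hpos, div_le_one hpos, abs_mul]
    have h1 := hSb (m+1) ω
    nlinarith [abs_nonneg (p-q), abs_nonneg (e.S (m+1) ω), hα1.le]
  have hDb : ∀ k, 1 ≤ k → ∀ ω, |D k ω| ≤ 2 := by
    intro k hk ω
    match k, hk with
    | 1, _ =>
      rw [hD1]; have := hXb 1 le_rfl ω; linarith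
    | (m+2), _ =>
      rw [hD2]
      have h1 := hXb (m+2) (by omega) ω
      have h2 := hcorrb m ω
      calc |e.X (m+2) ω - (p - q) * e.S (m+1) ω / ((m+1:ℕ):ℝ)|
          ≤ |e.X (m+2) ω| + |(p - q) * e.S (m+1) ω / ((m+1:ℕ):ℝ)| := abs_sub _ _
      _ ≤ 2 := by linarith
  have hDmF : ∀ k, 1 ≤ k → StronglyMeasurable[e.F k] (D k) := by
    intro k hk
    match k, hk with
    | 1, _ => rw [hD1]; exact e.adapted 1 le_rfl
    | (m+2), _ =>
      rw [hD2]
      simp only [div_eq_mul_inv]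
      exact (e.adapted (m+2) (by omega)).sub
        ((((hSmF (m+1)).mono (e.F.mono (Nat.le_succ _))).const_mul (p-q)).mul_const _)
  have hDm : ∀ k, 1 ≤ k → StronglyMeasurable[m0] (D k) :=
    fun k hk => (hDmF k hk).mono (e.F.le k)
  set M : ℕ → Ω → ℝ := fun n ω => ∑ k ∈ Finset.Icc 1 n, D k ω with hM_def
  have hMmF : ∀ n, StronglyMeasurable[e.F n] (M n) := by
    intro n
    apply Finset.stronglyMeasurable_fun_sum
    intro k hk
    obtain ⟨h1, h2⟩ := Finset.mem_Icc.mp hk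
    exact (hDmF k h1).mono (e.F.mono h2)
  have hMm : ∀ n, StronglyMeasurable[m0] (M n) := fun n => (hMmF n).mono (e.F.le n)
  have hMb : ∀ (n : ℕ) (ω : Ω), |M n ω| ≤ 2 * n := by
    intro n ω
    calc |M n ω| ≤ ∑ k ∈ Finset.Icc 1 n, |D k ω| := Finset.abs_sum_le_sum_abs _ _
    _ ≤ ∑ k ∈ Finset.Icc 1 n, 2 := Finset.sum_le_sum fun k hk =>
        hDb k (Finset.mem_Icc.mp hk).1 ω
    _ = 2 * n := by simp [mul_comm]
  -- integrability helper
  have hint : ∀ (f : Ω → ℝ) (C : ℝ), StronglyMeasurable[m0] f → (∀ ω, |f ω| ≤ C) →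
      Integrable f μ := by
    intro f C hm hb
    exact (integrable_const C).mono' hm.aestronglyMeasurable
      (ae_of_all _ fun ω => by simpa [Real.norm_eq_abs] using hb ω)
  have hDint : ∀ k, 1 ≤ k → Integrable (D k) μ := fun k hk => hint _ 2 (hDm k hk) (hDb k hk)
  have hMint : ∀ n : ℕ, Integrable (M n) μ := fun n => hint _ (2*n) (hMm n) (hMb n)
  have hsqint : ∀ n : ℕ, Integrable (fun ω => (M n ω)^2) μ := by
    intro n
    refine hint _ ((2*n)^2) ((hMm n).pow 2) fun ω => ?_
    rw [abs_pow]
    exact pow_le_pow_left₀ (abs_nonneg _) (hMb n ω) 2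
  -- conditional expectation of increments
  have hDcond : ∀ n, 1 ≤ n → μ[D (n+1) | e.F n] =ᵐ[μ] 0 := by
    intro n hn
    obtain ⟨m, rfl⟩ : ∃ m, n = m + 1 := ⟨n - 1, by omega⟩
    set g : Ω → ℝ := fun ω => (p - q) * e.S (m+1) ω / ((m+1 : ℕ) : ℝ) with hg_def
    have hgmF : StronglyMeasurable[e.F (m+1)] g := by
      rw [hg_def]
      simp only [div_eq_mul_inv]
      exact ((hSmF (m+1)).const_mul (p-q)).mul_const _
    have hgint : Integrable g μ := hint g 1 (hgmF.mono (e.F.le _)) (hcorrb m)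
    have hXint : Integrable (e.X (m+2)) μ :=
      hint _ 1 (hXm _ (by omega)) (fun ω => hXb _ (by omega) ω)
    have hDeq : D (m+2) = e.X (m+2) - g := by
      funext ω; rw [hD2]; simp [hg_def]
    have hgoal : μ[D (m+2) | e.F (m+1)] =ᵐ[μ] 0 := by
      rw [hDeq]
      refine (condExp_sub hXint hgint _).trans ?_
      rw [condExp_of_stronglyMeasurable (e.F.le (m+1)) hgmF hgint]
      have hc : μ[e.X (m+2)|e.F (m+1)] =ᵐ[μ]
          fun ω => (p - q) * (∑ k ∈ Finset.Icc 1 (m+1), e.X k ω) / ((m+1:ℕ):ℝ) :=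
        e.cond_one (m+1) (by omega)
      filter_upwards [hc] with ω hω
      simp only [Pi.sub_apply, Pi.zero_apply]
      rw [hω]
      simp [hg_def, ERWS.S]
    exact hgoal
  -- cross terms vanish
  have hcross : ∀ n, 1 ≤ n → ∫ ω, M n ω * D (n+1) ω ∂μ = 0 := by
    intro n hn
    have hprod : Integrable (M n * D (n+1)) μ := by
      refine hint _ (2*n*2) ((hMm n).mul (hDm (n+1) (by omega))) fun ω => ?_
      rw [Pi.mul_apply, abs_mul]
      have h1 := hMb n ω
      have h2 := hDb (n+1) (by omega) ω
      nlinarith [abs_nonneg (M n ω), abs_nonneg (D (n+1) ω)]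
    have h2 : μ[M n * D (n+1)|e.F n] =ᵐ[μ] 0 := by
      refine (condExp_mul_of_stronglyMeasurable_left (hMmF n) hprod (hDint (n+1) (by omega))).trans ?_
      filter_upwards [hDcond n hn] with ω hω
      rw [Pi.zero_apply] at hω
      simp only [Pi.mul_apply, Pi.zero_apply, hω, mul_zero]
    calc ∫ ω, M n ω * D (n+1) ω ∂μ
        = ∫ ω, (μ[M n * D (n+1)|e.F n]) ω ∂μ := (integral_condExp (e.F.le n)).symm
    _ = ∫ ω, (0 : Ω → ℝ) ω ∂μ := integral_congr_ae h2
    _ = 0 := by simp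
  -- second moment bound
  have hM2 : ∀ n : ℕ, 1 ≤ n → ∫ ω, (M n ω)^2 ∂μ ≤ 4 * n := by
    intro n hn
    induction n with
    | zero => omega
    | succ m ih =>
      rcases Nat.lt_or_ge m 1 with h1 | h1
      · have hm0 : m = 0 := by omega
        subst hm0
        have hb : ∀ ω, (M 1 ω)^2 ≤ 4 := by
          intro ω
          nlinarith [hMb 1 ω, abs_nonneg (M 1 ω), sq_abs (M 1 ω), Nat.cast_one (R := ℝ)]
        calc ∫ ω, (M 1 ω)^2 ∂μ ≤ ∫ _ω, (4:ℝ) ∂μ :=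
            integral_mono (hsqint 1) (integrable_const 4) hb
        _ = 4 := by simp
        _ ≤ 4 * ((1:ℕ):ℝ) := by norm_num
      · have ihm := ih h1
        have hMsucc : ∀ ω, M (m+1) ω = M m ω + D (m+1) ω := by
          intro ω
          rw [hM_def]
          exact Finset.sum_Icc_succ_top (by omega) _
        have hexp : ∀ ω, (M (m+1) ω)^2 =
            (M m ω)^2 + 2*(M m ω * D (m+1) ω) + (D (m+1) ω)^2 := by
          intro ω; rw [hMsucc]; ring
        have hintMD : Integrable (fun ω => M m ω * D (m+1) ω) μ := by
          refine hint _ (2*m*2) ((hMm m).mul (hDm (m+1) (by omega))) fun ω => ?_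
          rw [abs_mul]
          have h2 := hMb m ω
          have h3 := hDb (m+1) (by omega) ω
          nlinarith [abs_nonneg (M m ω), abs_nonneg (D (m+1) ω)]
        have hintD2 : Integrable (fun ω => (D (m+1) ω)^2) μ := by
          refine hint _ 4 ((hDm (m+1) (by omega)).pow 2) fun ω => ?_
          rw [abs_pow]
          have h3 := hDb (m+1) (by omega) ω
          nlinarith [abs_nonneg (D (m+1) ω)]
        have hD2le : ∫ ω, (D (m+1) ω)^2 ∂μ ≤ 4 := by
          have hle : ∫ ω, (D (m+1) ω)^2 ∂μ ≤ ∫ _ω, (4:ℝ) ∂μ := by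
            refine integral_mono hintD2 (integrable_const 4) fun ω => ?_
            have h3 := hDb (m+1) (by omega) ω
            nlinarith [abs_nonneg (D (m+1) ω), sq_abs (D (m+1) ω)]
          simpa using hle
        have h0 : ∫ ω, (M (m+1) ω)^2 ∂μ =
            ∫ ω, ((M m ω)^2 + 2*(M m ω * D (m+1) ω) + (D (m+1) ω)^2) ∂μ :=
          integral_congr_ae (ae_of_all _ hexp)
        have ha1 : ∫ ω, ((M m ω)^2 + 2*(M m ω * D (m+1) ω) + (D (m+1) ω)^2) ∂μ =
            ∫ ω, ((M m ω)^2 + 2*(M m ω * D (m+1) ω)) ∂μ + ∫ ω, (D (m+1) ω)^2 ∂μ :=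
          integral_add ((hsqint m).add (hintMD.const_mul 2)) hintD2
        have ha2 : ∫ ω, ((M m ω)^2 + 2*(M m ω * D (m+1) ω)) ∂μ =
            ∫ ω, (M m ω)^2 ∂μ + ∫ ω, 2*(M m ω * D (m+1) ω) ∂μ :=
          integral_add (hsqint m) (hintMD.const_mul 2)
        have ha3 : ∫ ω, 2*(M m ω * D (m+1) ω) ∂μ = 2 * ∫ ω, M m ω * D (m+1) ω ∂μ :=
          integral_const_mul 2 _
        have hsplit : ∫ ω, (M (m+1) ω)^2 ∂μ =
            ∫ ω, (M m ω)^2 ∂μ + 2 * ∫ ω, M m ω * D (m+1) ω ∂μ + ∫ ω, (D (m+1) ω)^2 ∂μ := by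
          rw [h0, ha1, ha2, ha3]
        rw [hsplit, hcross m h1]
        push_cast
        linarith
  -- increments of M are bounded
  have hstepM : ∀ (ω : Ω) (a b : ℕ), a ≤ b → |M b ω - M a ω| ≤ 2 * ((b - a : ℕ):ℝ) := by
    intro ω a b hab
    have hio : ∀ t : ℕ, Finset.Icc 1 t = Finset.Ioc 0 t := by
      intro t; ext x; simp only [Finset.mem_Icc, Finset.mem_Ioc]; omega
    have hsum : M b ω - M a ω = ∑ k ∈ Finset.Ioc a b, D k ω := by
      rw [hM_def]
      simp only [hio]
      rw [← Finset.sum_Ioc_consecutive _ (Nat.zero_le a) hab]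
      ring
    rw [hsum]
    calc |∑ k ∈ Finset.Ioc a b, D k ω| ≤ ∑ k ∈ Finset.Ioc a b, |D k ω| :=
        Finset.abs_sum_le_sum_abs _ _
    _ ≤ ∑ k ∈ Finset.Ioc a b, 2 := Finset.sum_le_sum fun k hk =>
        hDb k (by have := (Finset.mem_Ioc.mp hk).1; omega) ω
    _ = 2 * ((b - a : ℕ):ℝ) := by simp [Nat.card_Ioc, mul_comm]
  -- the key decomposition
  have hSkey : ∀ (n : ℕ) (ω : Ω), e.S (n+1) ω =
      M (n+1) ω + (p - q) * ∑ k ∈ Finset.Icc 1 n, (e.S k ω / (k:ℝ)) := by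
    intro n ω
    induction n with
    | zero =>
      simp [ERWS.S, hM_def, hD_def]
    | succ m ihm =>
      have hS : e.S (m+2) ω = e.S (m+1) ω + e.X (m+2) ω := by
        rw [ERWS.S, ERWS.S]
        exact Finset.sum_Icc_succ_top (by omega) _
      have hMs : M (m+2) ω = M (m+1) ω + D (m+2) ω := by
        rw [hM_def]
        exact Finset.sum_Icc_succ_top (by omega) _
      have hDs : D (m+2) ω = e.X (m+2) ω - (p-q) * e.S (m+1) ω / ((m+1:ℕ):ℝ) := by
        rw [hD2]
      have hsum : ∑ k ∈ Finset.Icc 1 (m+1), (e.S k ω / (k:ℝ)) =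
          (∑ k ∈ Finset.Icc 1 m, (e.S k ω / (k:ℝ))) + e.S (m+1) ω / ((m+1:ℕ):ℝ) :=
        Finset.sum_Icc_succ_top (by omega) _
      rw [hS, ihm, hMs, hDs, hsum]
      ring
  -- Chebyshev bound along squares
  have hcheb : ∀ ε : ℝ, 0 < ε → ∀ n : ℕ,
      μ {ω | ε ≤ |M ((n+1)^2) ω| / (((n+1)^2 : ℕ):ℝ)} ≤
        ENNReal.ofReal (4/ε^2 * (1/((n:ℝ)+1)^2)) := by
    intro ε hε n
    set N : ℕ := (n+1)^2 with hN_def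
    have hN1 : 1 ≤ N := by rw [hN_def]; exact Nat.one_le_pow 2 (n+1) (by omega)
    have hNR : (0:ℝ) < (N:ℝ) := by exact_mod_cast hN1
    have hsub : {ω | ε ≤ |M N ω| / (N:ℝ)} ⊆ {ω | (ε*(N:ℝ))^2 ≤ (M N ω)^2} := by
      intro ω hω
      simp only [Set.mem_setOf_eq] at hω ⊢
      rw [le_div_iff₀ hNR] at hω
      have h1 : (ε*(N:ℝ))^2 ≤ |M N ω|^2 := pow_le_pow_left₀ (by positivity) hω 2
      rwa [sq_abs] at h1
    have hmark := mul_meas_ge_le_integral_of_nonneg (μ := μ)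
      (f := fun ω => (M N ω)^2) (ae_of_all _ fun ω => sq_nonneg _) (hsqint N) ((ε*(N:ℝ))^2)
    have hi4 := hM2 N hN1
    have hm1 : (μ {ω | (ε*(N:ℝ))^2 ≤ (M N ω)^2}).toReal ≤ 4*(N:ℝ) / (ε*(N:ℝ))^2 := by
      rw [le_div_iff₀ (by positivity)]
      calc (μ {ω | (ε*(N:ℝ))^2 ≤ (M N ω)^2}).toReal * (ε*(N:ℝ))^2
          = (ε*(N:ℝ))^2 * (μ {ω | (ε*(N:ℝ))^2 ≤ (M N ω)^2}).toReal := by ring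
      _ ≤ ∫ ω, (M N ω)^2 ∂μ := hmark
      _ ≤ 4*(N:ℝ) := hi4
    have hm2 : (μ {ω | ε ≤ |M N ω| / (N:ℝ)}).toReal ≤ 4/ε^2 * (1/((n:ℝ)+1)^2) := by
      have hmono : (μ {ω | ε ≤ |M N ω| / (N:ℝ)}).toReal ≤
          (μ {ω | (ε*(N:ℝ))^2 ≤ (M N ω)^2}).toReal :=
        ENNReal.toReal_mono (measure_ne_top μ _) (measure_mono hsub)
      have heq : 4*(N:ℝ) / (ε*(N:ℝ))^2 = 4/ε^2 * (1/((n:ℝ)+1)^2) := by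
        rw [hN_def]
        push_cast
        field_simp
      linarith
    calc μ {ω | ε ≤ |M N ω| / (N:ℝ)}
        = ENNReal.ofReal ((μ {ω | ε ≤ |M N ω| / (N:ℝ)}).toReal) :=
        (ENNReal.ofReal_toReal (measure_ne_top μ _)).symm
    _ ≤ ENNReal.ofReal (4/ε^2 * (1/((n:ℝ)+1)^2)) := ENNReal.ofReal_le_ofReal hm2
  -- Borel–Cantelli along squares
  have hBC : ∀ᵐ ω ∂μ, Tendsto (fun n : ℕ => M ((n+1)^2) ω / (((n+1)^2 : ℕ):ℝ)) atTop (𝓝 0) := by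
    have H : ∀ j : ℕ, ∀ᵐ ω ∂μ, ∀ᶠ n in atTop,
        ω ∉ {ω : Ω | (1:ℝ)/((j:ℝ)+1) ≤ |M ((n+1)^2) ω| / (((n+1)^2:ℕ):ℝ)} := by
      intro j
      apply ae_eventually_notMem
      have hsummable : Summable (fun n : ℕ => 4/((1:ℝ)/((j:ℝ)+1))^2 * (1/((n:ℝ)+1)^2)) := by
        apply Summable.mul_left
        have h := (summable_nat_add_iff 1).mpr
          (Real.summable_one_div_nat_pow.mpr (by norm_num : 1 < 2))
        apply h.congr
        intro n
        push_cast
        ring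
      refine ne_of_lt (lt_of_le_of_lt
        (ENNReal.tsum_le_tsum (fun n => hcheb ((1:ℝ)/((j:ℝ)+1)) (by positivity) n)) ?_)
      rw [← ENNReal.ofReal_tsum_of_nonneg (fun n => by positivity) hsummable]
      exact ENNReal.ofReal_lt_top
    rw [← ae_all_iff] at H
    filter_upwards [H] with ω hω
    rw [NormedAddCommGroup.tendsto_nhds_zero]
    intro ε hε
    obtain ⟨j, hj⟩ := exists_nat_one_div_lt hε
    filter_upwards [hω j] with n hn
    simp only [Set.mem_setOf_eq, not_le] at hn
    have hpos : (0:ℝ) < (((n+1)^2:ℕ):ℝ) := by positivity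
    rw [norm_div, Real.norm_eq_abs, Real.norm_eq_abs, abs_of_pos hpos]
    exact lt_trans hn hj
  -- conclusion
  filter_upwards [hBC] with ω hω
  have hMten : Tendsto (fun n : ℕ => M n ω / n) atTop (𝓝 0) :=
    gap_aux (fun n => M n ω) (hstepM ω) hω
  exact det_aux hα1 (fun n => e.S n ω) (fun n => M n ω)
    (fun n => hSb n ω) (fun n => hSkey n ω) hMten
end
end

section
/- In the critical regime p/(1-r) = 3/4, the position of the ERWS satisfies S_n / n → 0 almost surely. -/
open MeasureTheory Filter Real Topology

noncomputable section

set_option linter.unusedSectionVars false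

namespace ERWSAux

variable {Ω : Type*} [m0 : MeasurableSpace Ω] {μ : Measure Ω} [IsProbabilityMeasure μ]
  {p q s : ℝ} (e : ERWS μ p q s)

lemma X_abs_le (n : ℕ) (hn : 1 ≤ n) (ω : Ω) : |e.X n ω| ≤ 1 := by
  rcases e.val_mem n hn ω with h | h | h <;> simp [h]

lemma X_sm (n : ℕ) (hn : 1 ≤ n) : StronglyMeasurable (e.X n) :=
  (e.adapted n hn).mono (e.F.le n)

lemma int_of_bound {f : Ω → ℝ} (hf : StronglyMeasurable f) (C : ℝ)
    (h : ∀ ω, |f ω| ≤ C) : Integrable f μ :=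
  (integrable_const C).mono' hf.aestronglyMeasurable (ae_of_all _ fun ω => by
    simpa using h ω)

lemma X_int (n : ℕ) (hn : 1 ≤ n) : Integrable (e.X n) μ :=
  int_of_bound (X_sm e n hn) 1 (X_abs_le e n hn)

lemma S_smF (n : ℕ) : StronglyMeasurable[e.F n] (e.S n) := by
  have : ∀ k ∈ Finset.Icc 1 n, StronglyMeasurable[e.F n] (e.X k) := fun k hk => by
    rw [Finset.mem_Icc] at hk
    exact (e.adapted k hk.1).mono (e.F.mono hk.2)
  exact Finset.stronglyMeasurable_fun_sum _ this

lemma S_sm (n : ℕ) : StronglyMeasurable (e.S n) := (S_smF e n).mono (e.F.le n)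

lemma S_abs_le (n : ℕ) (ω : Ω) : |e.S n ω| ≤ n := by
  calc |e.S n ω| ≤ ∑ k ∈ Finset.Icc 1 n, |e.X k ω| := Finset.abs_sum_le_sum_abs _ _
    _ ≤ ∑ k ∈ Finset.Icc 1 n, 1 := Finset.sum_le_sum fun k hk =>
        X_abs_le e k (Finset.mem_Icc.mp hk).1 ω
    _ = n := by simp

lemma S_int (n : ℕ) : Integrable (e.S n) μ :=
  int_of_bound (S_sm e n) n (S_abs_le e n)

lemma Ssq_int (n : ℕ) : Integrable (fun ω => (e.S n ω) ^ 2) μ := by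
  refine int_of_bound ((S_sm e n).pow 2) ((n : ℝ) ^ 2) fun ω => ?_
  rw [abs_pow]
  exact pow_le_pow_left₀ (abs_nonneg _) (S_abs_le e n ω) 2

lemma S_diff (a b : ℕ) (hab : a ≤ b) (ω : Ω) :
    |e.S b ω - e.S a ω| ≤ ((b - a : ℕ) : ℝ) := by
  have hsplit : e.S b ω - e.S a ω = ∑ k ∈ Finset.Ioc a b, e.X k ω := by
    have h1 : e.S a ω = ∑ k ∈ Finset.Ioc 0 a, e.X k ω := by
      unfold ERWS.S; rw [← Finset.Icc_add_one_left_eq_Ioc, zero_add]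
    have h2 : e.S b ω = ∑ k ∈ Finset.Ioc 0 b, e.X k ω := by
      unfold ERWS.S; rw [← Finset.Icc_add_one_left_eq_Ioc, zero_add]
    rw [h1, h2, ← Finset.sum_Ioc_consecutive _ (Nat.zero_le a) hab]
    ring
  rw [hsplit]
  calc |∑ k ∈ Finset.Ioc a b, e.X k ω| ≤ ∑ k ∈ Finset.Ioc a b, |e.X k ω| :=
        Finset.abs_sum_le_sum_abs _ _
    _ ≤ ∑ k ∈ Finset.Ioc a b, 1 := Finset.sum_le_sum fun k hk =>
        X_abs_le e k (Nat.one_le_iff_ne_zero.mpr (Nat.pos_of_ne_zero (by have := (Finset.mem_Ioc.mp hk).1; omega)).ne')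
          ω
    _ = ((b - a : ℕ) : ℝ) := by simp [Nat.card_Ioc]
lemma cross (e : ERWS μ p q s) (n : ℕ) (hn : 1 ≤ n) :
    ∫ ω, e.S n ω * e.X (n + 1) ω ∂μ = (p - q) / n * ∫ ω, (e.S n ω) ^ 2 ∂μ := by
  have hmul_int : Integrable (e.S n * e.X (n + 1)) μ := by
    refine int_of_bound ((S_sm e n).mul (X_sm e (n+1) (by omega))) n
      fun ω => ?_
    calc |(e.S n * e.X (n+1)) ω| = |e.S n ω| * |e.X (n+1) ω| := abs_mul _ _
      _ ≤ n * 1 := mul_le_mul (S_abs_le e n ω) (X_abs_le e (n+1) (by omega) ω)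
            (abs_nonneg _) (Nat.cast_nonneg n)
      _ = n := mul_one _
  have hpull := condExp_mul_of_stronglyMeasurable_left (S_smF e n) hmul_int
    (X_int e (n+1) (by omega))
  have hc := e.cond_one n hn
  calc ∫ ω, e.S n ω * e.X (n + 1) ω ∂μ
      = ∫ ω, (μ[e.S n * e.X (n+1)|e.F n]) ω ∂μ := (integral_condExp (e.F.le n) (f := e.S n * e.X (n+1))).symm
    _ = ∫ ω, e.S n ω * ((p - q) * (∑ k ∈ Finset.Icc 1 n, e.X k ω) / n) ∂μ := by
        refine integral_congr_ae (hpull.trans ?_)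
        filter_upwards [hc] with ω hω
        simp only [Pi.mul_apply, hω]
    _ = ∫ ω, (p - q) / n * (e.S n ω) ^ 2 ∂μ := by
        refine integral_congr_ae (ae_of_all _ fun ω => ?_)
        show e.S n ω * ((p - q) * e.S n ω / n) = _
        ring
    _ = (p - q) / n * ∫ ω, (e.S n ω) ^ 2 ∂μ := integral_const_mul _ _
end ERWSAux
section
variable {Ω : Type*} [m0 : MeasurableSpace Ω] {μ : Measure Ω} [IsProbabilityMeasure μ]
  {p q r s : ℝ}

lemma ERWSAux.moment (e : ERWS μ p q s) (hr0 : 0 < r) (hr1 : r < 1) (hα : p - q = (1 - r) / 2) :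
    ∀ n, 1 ≤ n → ∫ ω, (e.S n ω) ^ 2 ∂μ ≤ n / r := by
  intro n hn
  induction n with
  | zero => omega
  | succ n ih =>
    rcases Nat.eq_or_lt_of_le hn with h1 | h1
    · -- base case n + 1 = 1
      have hS1 : ∀ ω, (e.S 1 ω) ^ 2 ≤ 1 := fun ω => by
        have := ERWSAux.S_abs_le e 1 ω
        push_cast at this
        nlinarith [abs_nonneg (e.S 1 ω), sq_abs (e.S 1 ω)]
      have : ∫ ω, (e.S 1 ω) ^ 2 ∂μ ≤ ∫ _ω, (1:ℝ) ∂μ :=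
        integral_mono (ERWSAux.Ssq_int e 1) (integrable_const 1) hS1
      rw [← h1]
      simp only [Nat.cast_one] at this ⊢
      rw [integral_const] at this
      simp at this
      rw [le_div_iff₀ hr0]
      nlinarith
    · -- inductive step, with hn' : 1 ≤ n
      have hn' : 1 ≤ n := by omega
      have ihn := ih hn'
      have hnR : (0:ℝ) < n := by exact_mod_cast hn'
      -- expand S (n+1) = S n + X (n+1)
      have hexp : ∀ ω, e.S (n+1) ω = e.S n ω + e.X (n+1) ω := fun ω => by
        unfold ERWS.S; rw [Finset.sum_Icc_succ_top (by omega : 1 ≤ n + 1)]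
      have hXint : Integrable (e.X (n+1)) μ := ERWSAux.X_int e (n+1) (by omega)
      have hX2int : Integrable (fun ω => (e.X (n+1) ω)^2) μ := by
        refine ERWSAux.int_of_bound ((ERWSAux.X_sm e (n+1) (by omega)).pow 2) 1 fun ω => ?_
        rw [abs_pow]
        calc |e.X (n+1) ω| ^ 2 ≤ 1 ^ 2 :=
              pow_le_pow_left₀ (abs_nonneg _) (ERWSAux.X_abs_le e (n+1) (by omega) ω) 2
          _ = 1 := one_pow 2
      have hmul_int : Integrable (fun ω => e.S n ω * e.X (n + 1) ω) μ := by
        refine ERWSAux.int_of_bound ((ERWSAux.S_sm e n).mul (ERWSAux.X_sm e (n+1) (by omega))) n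
          fun ω => ?_
        calc |e.S n ω * e.X (n+1) ω| = |e.S n ω| * |e.X (n+1) ω| := abs_mul _ _
          _ ≤ n * 1 := mul_le_mul (ERWSAux.S_abs_le e n ω)
                (ERWSAux.X_abs_le e (n+1) (by omega) ω) (abs_nonneg _) (Nat.cast_nonneg n)
          _ = n := mul_one _
      have hcross : ∫ ω, e.S n ω * e.X (n + 1) ω ∂μ = (p - q) / n * ∫ ω, (e.S n ω) ^ 2 ∂μ :=
        ERWSAux.cross e n hn'
      have hX2 : ∫ ω, (e.X (n+1) ω) ^ 2 ∂μ ≤ 1 := by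
        have : ∫ ω, (e.X (n+1) ω) ^ 2 ∂μ ≤ ∫ _ω, (1:ℝ) ∂μ := by
          refine integral_mono hX2int (integrable_const 1) fun ω => ?_
          have h := ERWSAux.X_abs_le e (n+1) (by omega) ω
          nlinarith [abs_nonneg (e.X (n+1) ω), sq_abs (e.X (n+1) ω)]
        simpa using this
      have hsplit : ∫ ω, (e.S (n+1) ω) ^ 2 ∂μ
          = ∫ ω, (e.S n ω) ^ 2 ∂μ + 2 * ∫ ω, e.S n ω * e.X (n+1) ω ∂μ
            + ∫ ω, (e.X (n+1) ω) ^ 2 ∂μ := by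
        have heq : (fun ω => (e.S (n+1) ω) ^ 2)
            = fun ω => (e.S n ω) ^ 2 + 2 * (e.S n ω * e.X (n+1) ω) + (e.X (n+1) ω) ^ 2 := by
          funext ω; rw [hexp ω]; ring
        have i2 : Integrable (fun ω => 2 * (e.S n ω * e.X (n+1) ω)) μ := hmul_int.const_mul 2
        have i1 : Integrable (fun ω => (e.S n ω) ^ 2 + 2 * (e.S n ω * e.X (n+1) ω)) μ :=
          (ERWSAux.Ssq_int e n).add i2
        rw [heq, integral_add i1 hX2int, integral_add (ERWSAux.Ssq_int e n) i2,
          integral_const_mul]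
      rw [hsplit, hcross]
      have hsq_nonneg : (0:ℝ) ≤ ∫ ω, (e.S n ω) ^ 2 ∂μ :=
        integral_nonneg fun ω => sq_nonneg _
      have hcoef : 2 * ((p - q) / n) = (1 - r) / n := by rw [hα]; ring
      have h2 : 2 * ((p - q) / n * ∫ ω, (e.S n ω) ^ 2 ∂μ) ≤ (1 - r) / n * (n / r) := by
        rw [← mul_assoc, hcoef]
        have : (0:ℝ) ≤ (1 - r) / n := div_nonneg (by linarith) hnR.le
        exact mul_le_mul_of_nonneg_left ihn this
      have hfin : (n:ℝ) / r + (1 - r) / n * (n / r) + 1 = ((n:ℕ) + 1 : ℝ) / r := by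
        field_simp
        ring
      push_cast
      nlinarith [ihn, h2, hX2]
end
section
variable {Ω : Type*} [m0 : MeasurableSpace Ω] {μ : Measure Ω} [IsProbabilityMeasure μ]
  {p q r s : ℝ}

lemma ERWSAux.tsum_bound (e : ERWS μ p q s) (hr0 : 0 < r)
    (hmom : ∀ n, 1 ≤ n → ∫ ω, (e.S n ω) ^ 2 ∂μ ≤ n / r) (j : ℕ) :
    (∑' k : ℕ, μ {ω | 1 / ((j:ℝ)+1) * ((k:ℝ)+1)^2 ≤ |e.S ((k+1)^2) ω|}) ≠ ⊤ := by
  have hδ : (0:ℝ) < 1 / ((j:ℝ)+1) := by positivity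
  have key : ∀ k : ℕ, μ {ω | 1 / ((j:ℝ)+1) * ((k:ℝ)+1)^2 ≤ |e.S ((k+1)^2) ω|}
      ≤ ENNReal.ofReal (((j:ℝ)+1)^2 / r * (1 / ((k:ℝ)+1)^2)) := by
    intro k
    set m : ℕ := (k+1)^2 with hm
    have hm1 : 1 ≤ m := Nat.one_le_iff_ne_zero.mpr (by positivity)
    have hmR : (m:ℝ) = ((k:ℝ)+1)^2 := by push_cast [hm]; ring
    set ε : ℝ := (1 / ((j:ℝ)+1) * ((k:ℝ)+1)^2)^2 with hε
    have hε0 : 0 < ε := by positivity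
    have hsub : {ω | 1 / ((j:ℝ)+1) * ((k:ℝ)+1)^2 ≤ |e.S m ω|}
        ⊆ {ω | ε ≤ (e.S m ω)^2} := by
      intro ω hω
      simp only [Set.mem_setOf_eq] at hω ⊢
      calc ε ≤ |e.S m ω| ^ 2 := pow_le_pow_left₀ (by positivity) hω 2
        _ = (e.S m ω) ^ 2 := sq_abs _
    have cheb := mul_meas_ge_le_integral_of_nonneg (μ := μ)
      (ae_of_all _ fun ω => sq_nonneg (e.S m ω)) (ERWSAux.Ssq_int e m) ε
    have htoReal : (μ {ω | ε ≤ (e.S m ω)^2}).toReal ≤ ((j:ℝ)+1)^2 / r * (1 / ((k:ℝ)+1)^2) := by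
      have h1 : (μ {ω | ε ≤ (e.S m ω)^2}).toReal ≤ (m / r) / ε := by
        rw [le_div_iff₀ hε0]
        calc (μ {ω | ε ≤ (e.S m ω)^2}).toReal * ε
            = ε * (μ {ω | ε ≤ (e.S m ω)^2}).toReal := mul_comm _ _
          _ ≤ ∫ ω, (e.S m ω)^2 ∂μ := cheb
          _ ≤ m / r := hmom m hm1
      refine h1.trans (le_of_eq ?_)
      rw [hmR, hε]
      field_simp
    calc μ {ω | 1 / ((j:ℝ)+1) * ((k:ℝ)+1)^2 ≤ |e.S m ω|}
        ≤ μ {ω | ε ≤ (e.S m ω)^2} := measure_mono hsub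
      _ = ENNReal.ofReal ((μ {ω | ε ≤ (e.S m ω)^2}).toReal) :=
          (ENNReal.ofReal_toReal (measure_ne_top μ _)).symm
      _ ≤ ENNReal.ofReal (((j:ℝ)+1)^2 / r * (1 / ((k:ℝ)+1)^2)) :=
          ENNReal.ofReal_le_ofReal htoReal
  have hsummable : Summable (fun k : ℕ => ((j:ℝ)+1)^2 / r * (1 / ((k:ℝ)+1)^2)) := by
    apply Summable.mul_left
    have h0 : Summable (fun n : ℕ => 1 / (n:ℝ)^2) :=
      Real.summable_one_div_nat_pow.mpr one_lt_two
    have := (summable_nat_add_iff 1).mpr h0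
    exact this.congr fun k => by push_cast; ring
  have hle : (∑' k : ℕ, μ {ω | 1 / ((j:ℝ)+1) * ((k:ℝ)+1)^2 ≤ |e.S ((k+1)^2) ω|})
      ≤ ENNReal.ofReal (∑' k : ℕ, ((j:ℝ)+1)^2 / r * (1 / ((k:ℝ)+1)^2)) := by
    calc (∑' k : ℕ, μ {ω | 1 / ((j:ℝ)+1) * ((k:ℝ)+1)^2 ≤ |e.S ((k+1)^2) ω|})
        ≤ ∑' k : ℕ, ENNReal.ofReal (((j:ℝ)+1)^2 / r * (1 / ((k:ℝ)+1)^2)) :=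
          ENNReal.tsum_le_tsum key
      _ = ENNReal.ofReal (∑' k : ℕ, ((j:ℝ)+1)^2 / r * (1 / ((k:ℝ)+1)^2)) :=
          (ENNReal.ofReal_tsum_of_nonneg (fun k => by positivity) hsummable).symm
  exact ne_top_of_le_ne_top ENNReal.ofReal_ne_top hle
end


section
set_option maxHeartbeats 1000000 in
/-- in the critical regime `p/(1-r) = 3/4`, `S_n / n → 0` almost surely. -/
theorem erws_critical_as_convergence
    {Ω : Type*} [m0 : MeasurableSpace Ω] {μ : Measure Ω} [IsProbabilityMeasure μ]
    {p q r s : ℝ} (hp : 0 ≤ p) (hq : 0 ≤ q) (hr0 : 0 < r) (hr1 : r < 1)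
    (hpqr : p + q + r = 1) (hs0 : 0 ≤ s) (hs1 : s ≤ 1)
    (hcrit : p / (1 - r) = 3 / 4)
    (e : ERWS μ p q s) :
    ∀ᵐ ω ∂μ, Tendsto (fun n : ℕ => e.S n ω / n) atTop (𝓝 0) := by
  have h1r : (0:ℝ) < 1 - r := by linarith
  rw [div_eq_iff h1r.ne'] at hcrit
  have hα : p - q = (1 - r) / 2 := by linarith
  have hmom := ERWSAux.moment e hr0 hr1 hα
  have hBC : ∀ᵐ ω ∂μ, ∀ j : ℕ, ∀ᶠ k : ℕ in atTop,
      ω ∉ {ω | 1 / ((j:ℝ)+1) * ((k:ℝ)+1)^2 ≤ |e.S ((k+1)^2) ω|} :=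
    ae_all_iff.mpr fun j => ae_eventually_notMem (ERWSAux.tsum_bound e hr0 hmom j)
  filter_upwards [hBC] with ω hω
  rw [NormedAddCommGroup.tendsto_nhds_zero]
  intro ε hε
  obtain ⟨j, hjgt⟩ := exists_nat_gt (2 / ε)
  have hj : 1 / ((j:ℝ)+1) < ε / 2 := by
    rw [div_lt_div_iff₀ (by positivity) two_pos]
    rw [div_lt_iff₀ hε] at hjgt
    nlinarith
  obtain ⟨K, hK⟩ := eventually_atTop.mp (hω j)
  obtain ⟨M0, hM0⟩ := exists_nat_gt (4 / ε)
  refine eventually_atTop.mpr ⟨max ((K+1)^2) ((M0+1)^2), fun n hn => ?_⟩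
  have hn1 : (K+1)^2 ≤ n := le_trans (le_max_left _ _) hn
  have hn2 : (M0+1)^2 ≤ n := le_trans (le_max_right _ _) hn
  set m := Nat.sqrt n with hmdef
  have hKm : K + 1 ≤ m := by
    have := Nat.sqrt_le_sqrt hn1; rwa [Nat.sqrt_eq'] at this
  have hMm : M0 + 1 ≤ m := by
    have := Nat.sqrt_le_sqrt hn2; rwa [Nat.sqrt_eq'] at this
  have hm1 : 1 ≤ m := by omega
  have hm2n : m^2 ≤ n := Nat.sqrt_le' n
  have hn2m : n < (m+1)^2 := Nat.lt_succ_sqrt' n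
  have hnotA := hK (m - 1) (by omega)
  simp only [Set.mem_setOf_eq, not_le] at hnotA
  rw [Nat.sub_add_cancel hm1] at hnotA
  have hcastm : ((m - 1 : ℕ):ℝ) + 1 = (m:ℝ) := by
    rw [Nat.cast_sub hm1]; push_cast; ring
  rw [hcastm] at hnotA
  -- real facts
  have hmR : (0:ℝ) < m := by exact_mod_cast hm1
  have hn0 : 1 ≤ n := le_trans (Nat.one_le_pow _ _ (by omega)) hn2
  have hnR : (0:ℝ) < n := by exact_mod_cast hn0
  have hm2nR : ((m:ℝ))^2 ≤ (n:ℝ) := by exact_mod_cast hm2n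
  have hdiff := ERWSAux.S_diff e (m^2) n hm2n ω
  have hnsub : ((n - m^2 : ℕ):ℝ) ≤ 2 * m := by
    have hnat : n - m^2 ≤ 2*m := by
      have hx : (m+1)^2 = m^2 + 2*m + 1 := by ring
      omega
    calc ((n - m^2 : ℕ):ℝ) ≤ ((2*m : ℕ):ℝ) := by exact_mod_cast hnat
      _ = 2 * m := by push_cast; ring
  have habs : |e.S n ω| ≤ 1 / ((j:ℝ)+1) * (m:ℝ)^2 + 2 * m := by
    have h1 : |e.S n ω| ≤ |e.S (m^2) ω| + |e.S n ω - e.S (m^2) ω| := by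
      calc |e.S n ω| = |e.S (m^2) ω + (e.S n ω - e.S (m^2) ω)| := by ring_nf
        _ ≤ |e.S (m^2) ω| + |e.S n ω - e.S (m^2) ω| := abs_add_le _ _
    linarith [hnotA.le, hdiff.trans hnsub]
  have hMmR : ((M0:ℝ)+1) ≤ (m:ℝ) := by exact_mod_cast hMm
  have h4 : 4 < ε * m := by
    rw [div_lt_iff₀ hε] at hM0
    nlinarith
  have hfinal : |e.S n ω| < ε * n := by
    have hδ0 : (0:ℝ) ≤ 1 / ((j:ℝ)+1) := by positivity
    nlinarith [mul_le_mul_of_nonneg_right hj.le (sq_nonneg (m:ℝ)),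
      mul_lt_mul_of_pos_right h4 hmR, mul_le_mul_of_nonneg_left hm2nR hε.le]
  rw [Real.norm_eq_abs, abs_div, abs_of_pos hnR, div_lt_iff₀ hnR]
  linarith
end
end
end
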